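/- Each subcomplex |M^{[n,k]}| of the order complex of M^n has finitely many G_n-orbits of simplices. Concretely: the dimension of |M^n| is bounded, and for each p the map sending the orbit of a p-simplex (α₀,…,α_p) to (gr(α₀), (t^{(1)},…,t^{(p)})) ∈ [n,k] × (T_{≤k})^p is a well-defined injection into a finite set. -/

import Mathlib

open Function

/-- The set `S = (ℕ × ℕ) × {1,…,n}`, a disjoint union of `n` quadrants. -/
abbrev QSet (n : ℕ) := (ℕ × ℕ) × Fin n

/-- The translation of `S` with parameters `m : Fin n → ℕ`, shifting the `i`-th quadrant
diagonally by `m i`. -/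
def translMap {n : ℕ} (m : Fin n → ℕ) : QSet n → QSet n :=
  fun p => ((p.1.1 + m p.2, p.1.2 + m p.2), p.2)

/-- The generator `tᵢ` of the translation monoid `T`: diagonal shift by `1` on quadrant `Qᵢ`,
identity elsewhere. -/
def tgen {n : ℕ} (i : Fin n) : QSet n → QSet n :=
  translMap (fun j => if j = i then 1 else 0)

/-- The defining conditions of the monoid `M`: `g` is injective, eventually a diagonal
translation on each quadrant (B₁), and maps each vertical (resp. horizontal) half-line
order-preservingly onto a shifted vertical (resp. horizontal) half-line (B₂(a), B₂(b)). -/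
def MCond {n : ℕ} (g : QSet n → QSet n) : Prop :=
  Function.Injective g ∧
  ∃ (x₀ y₀ : ℕ) (m : Fin n → ℤ),
    (∀ (x y : ℕ) (i : Fin n), x₀ ≤ x → y₀ ≤ y →
      (g ((x, y), i)).2 = i ∧
      ((g ((x, y), i)).1.1 : ℤ) = (x : ℤ) + m i ∧
      ((g ((x, y), i)).1.2 : ℤ) = (y : ℤ) + m i) ∧
    (∀ (x : ℕ) (i : Fin n), ∃ (q : ℤ) (x' : ℕ) (i' : Fin n),
      ∀ y : ℕ, y₀ ≤ y →
        (g ((x, y), i)).1.1 = x' ∧ (g ((x, y), i)).2 = i' ∧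
        ((g ((x, y), i)).1.2 : ℤ) = (y : ℤ) + q) ∧
    (∀ (y : ℕ) (i : Fin n), ∃ (r : ℤ) (y' : ℕ) (i' : Fin n),
      ∀ x : ℕ, x₀ ≤ x →
        (g ((x, y), i)).1.2 = y' ∧ (g ((x, y), i)).2 = i' ∧
        ((g ((x, y), i)).1.1 : ℤ) = (x : ℤ) + r)

/-- The monoid `M` of injective self-maps of `S` satisfying B₁ and B₂. -/
def MMon (n : ℕ) := {g : QSet n → QSet n // MCond g}

/-- The order on `M`: `α ≤ β` iff `β = t α` for some translation `t ∈ T`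
(maps act on the right, so `t α` means "first `t`, then `α`"). -/
def Mle {n : ℕ} (α β : MMon n) : Prop :=
  ∃ m : Fin n → ℕ, ∀ s, α.1 (translMap m s) = β.1 s

/-- The strict order on `M`. -/
def Mlt {n : ℕ} (α β : MMon n) : Prop := Mle α β ∧ α ≠ β

/-- The degree `gr(α)`: the number of vertical half-lines occurring in the canonical
decomposition of `S - Sα`, i.e. the number of `(x,i)` such that the vertical half-line over
`(x,i)` eventually avoids the image of `α`. -/
noncomputable def gr {n : ℕ} (α : QSet n → QSet n) : ℕ :=
  Nat.card {p : ℕ × Fin n // ∃ N : ℕ, ∀ y : ℕ, N ≤ y → ((p.1, y), p.2) ∉ Set.range α}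

/-- A `p`-simplex of the subcomplex `|M^{[n,k]}|`: a strict chain in `M` all of whose
vertices have degree between `n` and `k`. -/
def IsSimplexNK (n k p : ℕ) (α : Fin (p + 1) → MMon n) : Prop :=
  (∀ i j : Fin (p + 1), i < j → Mlt (α i) (α j)) ∧
  ∀ j, n ≤ gr (α j).1 ∧ gr (α j).1 ≤ k

-- §1 basics
namespace SK
variable {n : ℕ}

lemma translMap_translMap (a b : Fin n → ℕ) (s : QSet n) :
    translMap a (translMap b s) = translMap (a + b) s := by
  simp only [translMap, Prod.mk.injEq, Pi.add_apply]
  exact ⟨⟨by ring, by ring⟩, trivial⟩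

lemma translMap_inj (v : Fin n → ℕ) : Function.Injective (translMap v) := by
  rintro ⟨⟨x,y⟩,i⟩ ⟨⟨x',y'⟩,i'⟩ h
  simp only [translMap, Prod.mk.injEq] at h
  obtain ⟨⟨h1,h2⟩,h3⟩ := h
  subst h3
  simp only [Prod.mk.injEq]
  exact ⟨⟨by omega, by omega⟩, trivial⟩

lemma mem_range_translMap (v : Fin n → ℕ) (p : QSet n) :
    p ∈ Set.range (translMap v) ↔ v p.2 ≤ p.1.1 ∧ v p.2 ≤ p.1.2 := by
  constructor
  · rintro ⟨⟨⟨x,y⟩,i⟩, rfl⟩; simp [translMap]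
  · rintro ⟨h1, h2⟩
    refine ⟨((p.1.1 - v p.2, p.1.2 - v p.2), p.2), ?_⟩
    show ((p.1.1 - v p.2 + v p.2, p.1.2 - v p.2 + v p.2), p.2) = p
    have e1 : p.1.1 - v p.2 + v p.2 = p.1.1 := by omega
    have e2 : p.1.2 - v p.2 + v p.2 = p.1.2 := by omega
    rw [e1, e2]

lemma mcond_translMap (v : Fin n → ℕ) : MCond (translMap v) := by
  refine ⟨translMap_inj v, 0, 0, fun i => (v i : ℤ), ?_, ?_, ?_⟩
  · intro x y i _ _; simp [translMap]
  · intro x i; exact ⟨(v i : ℤ), x + v i, i, fun y _ => by simp [translMap]⟩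
  · intro y i; exact ⟨(v i : ℤ), y + v i, i, fun x _ => by simp [translMap]⟩

def MissV (α : QSet n → QSet n) : Set (ℕ × Fin n) :=
  {c | ∃ N : ℕ, ∀ y : ℕ, N ≤ y → ((c.1, y), c.2) ∉ Set.range α}

lemma gr_eq_ncard (α : QSet n → QSet n) : gr α = (MissV α).ncard := by
  rw [gr, ← Nat.card_coe_set_eq]; rfl

def sliceSet (f : Fin n → ℕ) : Set (ℕ × Fin n) := {c | c.1 < f c.2}

def sliceFinset (f : Fin n → ℕ) : Finset (ℕ × Fin n) :=
  Finset.univ.biUnion (fun i => (Finset.range (f i)).image (fun a => (a, i)))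

lemma mem_sliceFinset (f : Fin n → ℕ) (c : ℕ × Fin n) :
    c ∈ sliceFinset f ↔ c.1 < f c.2 := by
  rcases c with ⟨a, i⟩
  simp [sliceFinset]

lemma coe_sliceFinset (f : Fin n → ℕ) : (sliceFinset f : Set (ℕ × Fin n)) = sliceSet f := by
  ext c; simp [mem_sliceFinset, sliceSet]

lemma card_sliceFinset (f : Fin n → ℕ) : (sliceFinset f).card = ∑ i, f i := by
  rw [sliceFinset, Finset.card_biUnion]
  · refine Finset.sum_congr rfl fun i _ => ?_
    rw [Finset.card_image_of_injective _ (fun a b h => (Prod.mk.injEq _ _ _ _).mp h |>.1)]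
    simp
  · intro i _ j _ hij
    simp only [Finset.disjoint_left]
    intro c hc hc'
    simp only [Finset.mem_image, Finset.mem_range] at hc hc'
    obtain ⟨a, _, rfl⟩ := hc
    obtain ⟨b, _, h⟩ := hc'
    exact hij ((Prod.mk.injEq _ _ _ _).mp h).2.symm

lemma sliceSet_finite (f : Fin n → ℕ) : (sliceSet f).Finite := by
  rw [← coe_sliceFinset]; exact (sliceFinset f).finite_toSet

lemma ncard_sliceSet (f : Fin n → ℕ) : (sliceSet f).ncard = ∑ i, f i := by
  rw [← coe_sliceFinset, Set.ncard_coe_finset, card_sliceFinset]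

lemma gr_eq_ncard' (α : QSet n → QSet n) : gr α = (MissV α).ncard := by
  rw [gr, ← Nat.card_coe_set_eq]; rfl

variable {n : ℕ}

structure Wit {n : ℕ} (α : QSet n → QSet n) where
  inj : Function.Injective α
  x₀ : ℕ
  y₀ : ℕ
  m : Fin n → ℤ
  b1 : ∀ (x y : ℕ) (i : Fin n), x₀ ≤ x → y₀ ≤ y →
      (α ((x, y), i)).2 = i ∧
      ((α ((x, y), i)).1.1 : ℤ) = (x : ℤ) + m i ∧
      ((α ((x, y), i)).1.2 : ℤ) = (y : ℤ) + m i
  b2a : ∀ (x : ℕ) (i : Fin n), ∃ (q : ℤ) (x' : ℕ) (i' : Fin n),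
      ∀ y : ℕ, y₀ ≤ y → (α ((x, y), i)).1.1 = x' ∧ (α ((x, y), i)).2 = i' ∧
        ((α ((x, y), i)).1.2 : ℤ) = (y : ℤ) + q
  b2b : ∀ (y : ℕ) (i : Fin n), ∃ (r : ℤ) (y' : ℕ) (i' : Fin n),
      ∀ x : ℕ, x₀ ≤ x → (α ((x, y), i)).1.2 = y' ∧ (α ((x, y), i)).2 = i' ∧
        ((α ((x, y), i)).1.1 : ℤ) = (x : ℤ) + r

variable {α : QSet n → QSet n} (W : Wit α)

/-- vertical shift of the image of column `c`. -/
noncomputable def Wit.q (c : ℕ × Fin n) : ℤ := (W.b2a c.1 c.2).choose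

/-- target column of column `c`. -/
noncomputable def Wit.tgt (c : ℕ × Fin n) : ℕ × Fin n :=
  ((W.b2a c.1 c.2).choose_spec.choose, (W.b2a c.1 c.2).choose_spec.choose_spec.choose)

lemma Wit.tgt_spec (c : ℕ × Fin n) (y : ℕ) (hy : W.y₀ ≤ y) :
    (α ((c.1, y), c.2)).1.1 = (W.tgt c).1 ∧ (α ((c.1, y), c.2)).2 = (W.tgt c).2 ∧
      ((α ((c.1, y), c.2)).1.2 : ℤ) = (y : ℤ) + W.q c :=
  (W.b2a c.1 c.2).choose_spec.choose_spec.choose_spec y hy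

lemma Wit.tgt_spec' (x : ℕ) (i : Fin n) (y : ℕ) (hy : W.y₀ ≤ y) :
    (α ((x, y), i)).1.1 = (W.tgt (x, i)).1 ∧ (α ((x, y), i)).2 = (W.tgt (x, i)).2 ∧
      ((α ((x, y), i)).1.2 : ℤ) = (y : ℤ) + W.q (x, i) :=
  W.tgt_spec (x, i) y hy

lemma Wit.tgt_pt (c : ℕ × Fin n) (y : ℕ) (hy : (W.y₀ : ℤ) + W.q c ≤ y) :
    (((W.tgt c).1, y), (W.tgt c).2) ∈ Set.range α := by
  set b : ℕ := ((y : ℤ) - W.q c).toNat with hb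
  have hbc : (b : ℤ) = (y : ℤ) - W.q c := Int.toNat_of_nonneg (by omega)
  have hby : W.y₀ ≤ b := by omega
  obtain ⟨h1, h2, h3⟩ := W.tgt_spec c b hby
  have h3' : (α ((c.1, b), c.2)).1.2 = y := by omega
  exact ⟨((c.1, b), c.2), Prod.ext (Prod.ext h1 h3') h2⟩

lemma Wit.tgt_inj : Function.Injective W.tgt := by
  intro c c' h
  set Y : ℤ := max ((W.y₀ : ℤ) + W.q c) ((W.y₀ : ℤ) + W.q c') with hY
  have hY1 : (W.y₀ : ℤ) + W.q c ≤ Y := le_max_left _ _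
  have hY2 : (W.y₀ : ℤ) + W.q c' ≤ Y := le_max_right _ _
  set b : ℕ := (Y - W.q c).toNat with hb
  set b' : ℕ := (Y - W.q c').toNat with hb'
  have hbc : (b : ℤ) = Y - W.q c := Int.toNat_of_nonneg (by omega)
  have hbc' : (b' : ℤ) = Y - W.q c' := Int.toNat_of_nonneg (by omega)
  have hby : W.y₀ ≤ b := by omega
  have hby' : W.y₀ ≤ b' := by omega
  obtain ⟨h1, h2, h3⟩ := W.tgt_spec c b hby
  obtain ⟨h1', h2', h3'⟩ := W.tgt_spec c' b' hby'
  have heq : α ((c.1, b), c.2) = α ((c'.1, b'), c'.2) := by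
    have e2 : (α ((c.1, b), c.2)).1.2 = (α ((c'.1, b'), c'.2)).1.2 := by omega
    have e1 : (α ((c.1, b), c.2)).1.1 = (α ((c'.1, b'), c'.2)).1.1 := by rw [h1, h1', h]
    have e3 : (α ((c.1, b), c.2)).2 = (α ((c'.1, b'), c'.2)).2 := by rw [h2, h2', h]
    exact Prod.ext (Prod.ext e1 e2) e3
  have := W.inj heq
  have e1 : c.1 = c'.1 := congrArg (fun p => p.1.1) this
  have e2 : c.2 = c'.2 := congrArg (fun p => p.2) this
  exact Prod.ext e1 e2

lemma Wit.tgt_far (x : ℕ) (i : Fin n) (hx : W.x₀ ≤ x) :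
    ((W.tgt (x, i)).1 : ℤ) = (x : ℤ) + W.m i ∧ (W.tgt (x, i)).2 = i ∧ W.q (x, i) = W.m i := by
  obtain ⟨h1, h2, h3⟩ := W.tgt_spec' x i W.y₀ le_rfl
  obtain ⟨g1, g2, g3⟩ := W.b1 x W.y₀ i hx le_rfl
  refine ⟨by rw [← h1]; exact g2, by rw [← h2]; exact g1, by omega⟩

lemma Wit.m_lb (i : Fin n) : 0 ≤ (W.x₀ : ℤ) + W.m i := by
  have := (W.tgt_far W.x₀ i le_rfl).1
  have h0 : (0 : ℤ) ≤ ((W.tgt (W.x₀, i)).1 : ℤ) := Int.ofNat_nonneg _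
  omega

lemma Wit.mem_range_tgt_of_far (c : ℕ × Fin n) (hc : (W.x₀ : ℤ) + W.m c.2 ≤ (c.1 : ℤ)) :
    c ∈ Set.range W.tgt := by
  set a : ℕ := ((c.1 : ℤ) - W.m c.2).toNat with ha
  have hac : (a : ℤ) = (c.1 : ℤ) - W.m c.2 := Int.toNat_of_nonneg (by have := W.m_lb c.2; omega)
  have hax : W.x₀ ≤ a := by omega
  obtain ⟨f1, f2, _⟩ := W.tgt_far a c.2 hax
  refine ⟨(a, c.2), ?_⟩
  have e1 : (W.tgt (a, c.2)).1 = c.1 := by omega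
  exact Prod.ext e1 f2

/-- uniform bound on the vertical shifts. -/
noncomputable def Wit.Qb : ℕ :=
  ((Finset.range W.x₀ ×ˢ (Finset.univ : Finset (Fin n))).sup fun c => (W.q c).toNat) ⊔
    (Finset.univ.sup fun i => (W.m i).toNat)

lemma Wit.q_le (c : ℕ × Fin n) : W.q c ≤ (W.Qb : ℤ) := by
  rcases lt_or_ge c.1 W.x₀ with h | h
  · have hmem : c ∈ Finset.range W.x₀ ×ˢ (Finset.univ : Finset (Fin n)) := by
      simp [Finset.mem_product, h]
    have := Finset.le_sup (f := fun c => (W.q c).toNat) hmem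
    calc W.q c ≤ ((W.q c).toNat : ℤ) := Int.self_le_toNat _
    _ ≤ _ := by exact_mod_cast le_trans this le_sup_left
  · have hq : W.q c = W.m c.2 := by
      have := (W.tgt_far c.1 c.2 h).2.2; rwa [Prod.mk.eta] at this
    have := Finset.le_sup (f := fun i => (W.m i).toNat) (Finset.mem_univ c.2)
    calc W.q c ≤ ((W.m c.2).toNat : ℤ) := by rw [hq]; exact Int.self_le_toNat _
    _ ≤ _ := by exact_mod_cast le_trans this le_sup_right

/-- data for rows. -/
noncomputable def Wit.rq (c : ℕ × Fin n) : ℤ := (W.b2b c.1 c.2).choose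
noncomputable def Wit.rtg (c : ℕ × Fin n) : ℕ × Fin n :=
  ((W.b2b c.1 c.2).choose_spec.choose, (W.b2b c.1 c.2).choose_spec.choose_spec.choose)

lemma Wit.rtg_spec (c : ℕ × Fin n) (x : ℕ) (hx : W.x₀ ≤ x) :
    (α ((x, c.1), c.2)).1.2 = (W.rtg c).1 ∧ (α ((x, c.1), c.2)).2 = (W.rtg c).2 ∧
      ((α ((x, c.1), c.2)).1.1 : ℤ) = (x : ℤ) + W.rq c :=
  (W.b2b c.1 c.2).choose_spec.choose_spec.choose_spec x hx

/-- uniform bound on heights of images of points of height `< y₀`. -/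
noncomputable def Wit.Hb : ℕ :=
  ((Finset.range W.y₀ ×ˢ (Finset.univ : Finset (Fin n))).sup fun c => (W.rtg c).1) ⊔
    ((Finset.range W.x₀ ×ˢ Finset.range W.y₀ ×ˢ (Finset.univ : Finset (Fin n))).sup
      fun t => (α ((t.1, t.2.1), t.2.2)).1.2)

lemma Wit.height_le (a b : ℕ) (j : Fin n) (hb : b < W.y₀) : (α ((a, b), j)).1.2 ≤ W.Hb := by
  rcases le_or_gt W.x₀ a with h | h
  · have := (W.rtg_spec (b, j) a h).1
    rw [this]
    refine le_trans (Finset.le_sup (f := fun c => (W.rtg c).1) ?_) le_sup_left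
    simp [Finset.mem_product, hb]
  · have hmem : ((a, b, j) : ℕ × ℕ × Fin n) ∈
        Finset.range W.x₀ ×ˢ Finset.range W.y₀ ×ˢ (Finset.univ : Finset (Fin n)) := by
      simp [Finset.mem_product, hb, h]
    exact le_trans (Finset.le_sup
      (f := fun t : ℕ × ℕ × Fin n => (α ((t.1, t.2.1), t.2.2)).1.2) hmem) le_sup_right

/-- the uniform threshold above which membership in the range is governed by `MissV`. -/
noncomputable def Wit.Y1 : ℕ := max (W.y₀ + W.Qb + 1) (W.Hb + 1)

lemma Wit.present_tail (c : ℕ × Fin n) (hc : c ∈ Set.range W.tgt) (y : ℕ) (hy : W.Y1 ≤ y) :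
    ((c.1, y), c.2) ∈ Set.range α := by
  obtain ⟨c', rfl⟩ := hc
  have h1 : W.q c' ≤ (W.Qb : ℤ) := W.q_le c'
  have h2 : W.y₀ + W.Qb + 1 ≤ y := le_trans (le_max_left _ _) hy
  exact W.tgt_pt c' y (by omega)

lemma Wit.mem_range_tgt_of_present (x y : ℕ) (i : Fin n) (hy : W.Y1 ≤ y)
    (h : (((x, y), i) : QSet n) ∈ Set.range α) : (x, i) ∈ Set.range W.tgt := by
  obtain ⟨⟨⟨a, b⟩, j⟩, hs⟩ := h
  rcases lt_or_ge b W.y₀ with hb | hb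
  · exfalso
    have h1 := W.height_le a b j hb
    rw [hs] at h1
    dsimp only at h1
    have h2 : W.Hb + 1 ≤ y := le_trans (le_max_right _ _) hy
    omega
  · obtain ⟨h1, h2, _⟩ := W.tgt_spec (a, j) b hb
    rw [hs] at h1 h2
    exact ⟨(a, j), Prod.ext h1.symm h2.symm⟩

lemma Wit.not_missV_of_mem_range_tgt (c : ℕ × Fin n) (hc : c ∈ Set.range W.tgt) :
    c ∉ MissV α := by
  rintro ⟨N, hN⟩
  exact hN (max N W.Y1) (le_max_left _ _) (W.present_tail c hc _ (le_max_right _ _))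

lemma Wit.range_iff (x y : ℕ) (i : Fin n) (hy : W.Y1 ≤ y) :
    (((x, y), i) : QSet n) ∈ Set.range α ↔ (x, i) ∉ MissV α := by
  constructor
  · intro h
    exact W.not_missV_of_mem_range_tgt _ (W.mem_range_tgt_of_present x y i hy h)
  · intro h
    have : ¬ (∀ y' : ℕ, W.Y1 ≤ y' → ((x, y'), i) ∉ Set.range α) := fun hh => h ⟨W.Y1, hh⟩
    push_neg at this
    obtain ⟨y', hy', hmem⟩ := this
    exact W.present_tail (x, i) (W.mem_range_tgt_of_present x y' i hy' hmem) y hy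

lemma Wit.missV_eq : MissV α = (Set.range W.tgt)ᶜ := by
  ext c
  constructor
  · intro h hr; exact W.not_missV_of_mem_range_tgt c hr h
  · intro h
    refine ⟨W.Y1, fun y hy hmem => ?_⟩
    exact h (W.mem_range_tgt_of_present c.1 y c.2 hy hmem)

lemma Wit.missV_subset : MissV α ⊆ sliceSet (fun i => ((W.x₀ : ℤ) + W.m i).toNat) := by
  intro c hc
  by_contra h
  have h' : ((W.x₀ : ℤ) + W.m c.2) ≤ (c.1 : ℤ) := by
    simp only [sliceSet, Set.mem_setOf_eq, not_lt] at h
    have := W.m_lb c.2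
    omega
  exact W.not_missV_of_mem_range_tgt c (W.mem_range_tgt_of_far c h') hc

lemma Wit.missV_finite (W : Wit α) : (MissV α).Finite :=
  Set.Finite.subset (sliceSet_finite _) W.missV_subset

lemma Wit.slice_diff :
    sliceSet (fun i => ((W.x₀ : ℤ) + W.m i).toNat) \ MissV α =
      W.tgt '' (sliceSet (fun _ => W.x₀)) := by
  ext c
  constructor
  · rintro ⟨hs, hm⟩
    rw [W.missV_eq] at hm
    simp only [Set.mem_compl_iff, not_not] at hm
    obtain ⟨c', rfl⟩ := hm
    refine ⟨c', ?_, rfl⟩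
    by_contra h
    simp only [sliceSet, Set.mem_setOf_eq, not_lt] at h
    obtain ⟨f1, f2, _⟩ := W.tgt_far c'.1 c'.2 h
    rw [Prod.mk.eta] at f1 f2
    simp only [sliceSet, Set.mem_setOf_eq] at hs
    have : (((W.x₀ : ℤ) + W.m (W.tgt c').2).toNat : ℤ) = (W.x₀ : ℤ) + W.m (W.tgt c').2 :=
      Int.toNat_of_nonneg (W.m_lb _)
    rw [f2] at hs this
    omega
  · rintro ⟨c', hc', rfl⟩
    constructor
    · -- tgt of low column is in the slice
      by_contra h
      simp only [sliceSet, Set.mem_setOf_eq, not_lt] at h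
      have htn : (((W.x₀ : ℤ) + W.m (W.tgt c').2).toNat : ℤ) = (W.x₀ : ℤ) + W.m (W.tgt c').2 :=
        Int.toNat_of_nonneg (W.m_lb _)
      set a : ℕ := (((W.tgt c').1 : ℤ) - W.m (W.tgt c').2).toNat with ha
      have hac : (a : ℤ) = ((W.tgt c').1 : ℤ) - W.m (W.tgt c').2 :=
        Int.toNat_of_nonneg (by omega)
      have hax : W.x₀ ≤ a := by omega
      obtain ⟨f1, f2, _⟩ := W.tgt_far a (W.tgt c').2 hax
      have heq : W.tgt (a, (W.tgt c').2) = W.tgt c' := by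
        have e1 : (W.tgt (a, (W.tgt c').2)).1 = (W.tgt c').1 := by omega
        exact Prod.ext e1 f2
      have hinj := W.tgt_inj heq
      rw [← hinj] at hc'
      simp only [sliceSet, Set.mem_setOf_eq] at hc'
      omega
    · rw [W.missV_eq]
      simp only [Set.mem_compl_iff, not_not]
      exact ⟨c', rfl⟩

lemma Wit.gr_eq_sum (W : Wit α) : (gr α : ℤ) = ∑ i, W.m i := by
  have e : gr α = (MissV α).ncard := by
    rw [gr, ← Nat.card_coe_set_eq]; rfl
  have hfin : (sliceSet (fun i => ((W.x₀ : ℤ) + W.m i).toNat)).Finite := sliceSet_finite _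
  have hcard := Set.ncard_diff_add_ncard_of_subset W.missV_subset hfin
  rw [W.slice_diff, Set.ncard_image_of_injective _ W.tgt_inj, ncard_sliceSet, ncard_sliceSet]
    at hcard
  have hsum : (∑ i, (((W.x₀ : ℤ) + W.m i).toNat : ℤ)) = ∑ i : Fin n, ((W.x₀ : ℤ) + W.m i) :=
    Finset.sum_congr rfl fun i _ => Int.toNat_of_nonneg (W.m_lb i)
  have hc2 : ((∑ i, ((W.x₀ : ℤ) + W.m i).toNat : ℕ) : ℤ) = ∑ i : Fin n, ((W.x₀ : ℤ) + W.m i) := by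
    push_cast
    exact hsum
  have hc3 : (((∑ _i : Fin n, W.x₀ : ℕ)) : ℤ) = ∑ _i : Fin n, (W.x₀ : ℤ) := by push_cast; rfl
  have := congrArg (fun k : ℕ => (k : ℤ)) hcard
  simp only [Nat.cast_add] at this
  rw [e]
  rw [hc2, hc3] at this
  rw [Finset.sum_add_distrib] at this
  omega

/-! ### Transposition -/

def conjQ : QSet n → QSet n := fun p => ((p.1.2, p.1.1), p.2)

def conjM (α : QSet n → QSet n) : QSet n → QSet n := fun p => conjQ (α (conjQ p))

def MissH (α : QSet n → QSet n) : Set (ℕ × Fin n) := MissV (conjM α)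

lemma mem_range_conjM (α : QSet n → QSet n) (p : QSet n) :
    p ∈ Set.range (conjM α) ↔ conjQ p ∈ Set.range α := by
  constructor
  · rintro ⟨s, rfl⟩
    exact ⟨conjQ s, rfl⟩
  · rintro ⟨s, hs⟩
    refine ⟨conjQ s, ?_⟩
    show conjQ (α (conjQ (conjQ s))) = p
    have : conjQ (conjQ s) = s := rfl
    rw [this, hs]
    rfl

lemma mem_missH (α : QSet n → QSet n) (c : ℕ × Fin n) :
    c ∈ MissH α ↔ ∃ N : ℕ, ∀ x : ℕ, N ≤ x → (((x, c.1), c.2) : QSet n) ∉ Set.range α := by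
  unfold MissH MissV
  simp only [Set.mem_setOf_eq]
  constructor
  · rintro ⟨N, hN⟩
    exact ⟨N, fun x hx hmem => hN x hx ((mem_range_conjM α _).mpr hmem)⟩
  · rintro ⟨N, hN⟩
    exact ⟨N, fun x hx hmem => hN x hx ((mem_range_conjM α _).mp hmem)⟩

noncomputable def Wit.conj (W : Wit α) : Wit (conjM α) where
  inj := by
    intro a b h
    have h' : α (conjQ a) = α (conjQ b) := by
      have : conjQ (conjM α a) = conjQ (conjM α b) := by rw [h]
      exact this
    have := W.inj h'
    have : conjQ (conjQ a) = conjQ (conjQ b) := by rw [this]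
    exact this
  x₀ := W.y₀
  y₀ := W.x₀
  m := W.m
  b1 := fun x y i hx hy => by
    obtain ⟨g1, g2, g3⟩ := W.b1 y x i hy hx
    exact ⟨g1, g3, g2⟩
  b2a := fun x i => by
    obtain ⟨r, y', i', hr⟩ := W.b2b x i
    refine ⟨r, y', i', fun y hy => ?_⟩
    obtain ⟨a1, a2, a3⟩ := hr y hy
    exact ⟨a1, a2, a3⟩
  b2b := fun y i => by
    obtain ⟨q, x', i', hq⟩ := W.b2a y i
    refine ⟨q, x', i', fun x hx => ?_⟩
    obtain ⟨a1, a2, a3⟩ := hq x hx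
    exact ⟨a1, a2, a3⟩

lemma Wit.missH_ncard (W : Wit α) : ((MissH α).ncard : ℤ) = (gr α : ℤ) := by
  have h1 : (gr (conjM α) : ℤ) = ∑ i, W.m i := W.conj.gr_eq_sum
  have h2 := W.gr_eq_sum
  have h3 : gr (conjM α) = (MissH α).ncard := gr_eq_ncard _
  rw [← h3]; omega

lemma Wit.missH_finite (W : Wit α) : (MissH α).Finite := W.conj.missV_finite

noncomputable def Wit.X1 (W : Wit α) : ℕ := W.conj.Y1

lemma Wit.range_iff_row (W : Wit α) (x y : ℕ) (i : Fin n) (hx : W.X1 ≤ x) :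
    (((x, y), i) : QSet n) ∈ Set.range α ↔ (y, i) ∉ MissH α := by
  have := W.conj.range_iff y x i hx
  rw [mem_range_conjM] at this
  exact this

/-! ### monotonicity of the degree -/

lemma range_subset_of_comp {α β : QSet n → QSet n} (v : Fin n → ℕ)
    (h : ∀ s, α (translMap v s) = β s) : Set.range β ⊆ Set.range α := by
  rintro p ⟨s, rfl⟩
  exact ⟨translMap v s, h s⟩

lemma missV_mono {α β : QSet n → QSet n} (v : Fin n → ℕ)
    (h : ∀ s, α (translMap v s) = β s) : MissV α ⊆ MissV β := by
  rintro c ⟨N, hN⟩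
  exact ⟨N, fun y hy hmem => hN y hy (range_subset_of_comp v h hmem)⟩

lemma Wit.tgt_slice_missV (W : Wit α) {β : QSet n → QSet n} (v : Fin n → ℕ)
    (h : ∀ s, α (translMap v s) = β s) (c : ℕ × Fin n) (hc : c ∈ sliceSet v) :
    W.tgt c ∈ MissV β := by
  refine ⟨W.y₀ + (W.q c).toNat, fun y hy hmem => ?_⟩
  obtain ⟨s, hs⟩ := hmem
  rw [← h s] at hs
  set b : ℕ := ((y : ℤ) - W.q c).toNat with hb
  have hq : W.q c ≤ ((W.q c).toNat : ℤ) := Int.self_le_toNat _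
  have hbc : (b : ℤ) = (y : ℤ) - W.q c := Int.toNat_of_nonneg (by omega)
  have hby : W.y₀ ≤ b := by omega
  obtain ⟨h1, h2, h3⟩ := W.tgt_spec c b hby
  have hpt : α ((c.1, b), c.2) = (((W.tgt c).1, y), (W.tgt c).2) := by
    have e2 : (α ((c.1, b), c.2)).1.2 = y := by omega
    exact Prod.ext (Prod.ext h1 e2) h2
  have := W.inj (hs.trans hpt.symm)
  have e1 : (translMap v s).1.1 = c.1 := by rw [this]
  have e2 : (translMap v s).2 = c.2 := by rw [this]
  simp only [translMap] at e1 e2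
  rw [e2] at e1
  simp only [sliceSet, Set.mem_setOf_eq] at hc
  omega

lemma Wit.gr_add_le (W : Wit α) {β : QSet n → QSet n} (Wb : Wit β) (v : Fin n → ℕ)
    (h : ∀ s, α (translMap v s) = β s) : gr α + ∑ i, v i ≤ gr β := by
  have hsub : MissV α ∪ W.tgt '' sliceSet v ⊆ MissV β := by
    rintro c (hc | hc)
    · exact missV_mono v h hc
    · obtain ⟨c', hc', rfl⟩ := hc
      exact W.tgt_slice_missV v h c' hc'
  have hdis : Disjoint (MissV α) (W.tgt '' sliceSet v) := by
    rw [Set.disjoint_right]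
    rintro c ⟨c', _, rfl⟩
    exact fun hm => W.not_missV_of_mem_range_tgt _ ⟨c', rfl⟩ hm
  have hfin1 : (MissV α).Finite := W.missV_finite
  have hfin2 : (W.tgt '' sliceSet v).Finite := (sliceSet_finite v).image _
  have hcard : (MissV α ∪ W.tgt '' sliceSet v).ncard = gr α + ∑ i, v i := by
    rw [Set.ncard_union_eq hdis hfin1 hfin2, Set.ncard_image_of_injective _ W.tgt_inj,
      ncard_sliceSet, gr_eq_ncard]
  calc gr α + ∑ i, v i = (MissV α ∪ W.tgt '' sliceSet v).ncard := hcard.symm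
  _ ≤ (MissV β).ncard := Set.ncard_le_ncard hsub Wb.missV_finite
  _ = gr β := (gr_eq_ncard β).symm

lemma missV_translMap (v : Fin n → ℕ) : MissV (translMap v) = sliceSet v := by
  ext c
  constructor
  · rintro ⟨N, hN⟩
    by_contra h
    simp only [sliceSet, Set.mem_setOf_eq, not_lt] at h
    refine hN (max N (v c.2)) (le_max_left _ _) ?_
    refine ⟨((c.1 - v c.2, max N (v c.2) - v c.2), c.2), ?_⟩
    show ((c.1 - v c.2 + v c.2, max N (v c.2) - v c.2 + v c.2), c.2) = _
    have e1 : c.1 - v c.2 + v c.2 = c.1 := by omega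
    have e2 : max N (v c.2) - v c.2 + v c.2 = max N (v c.2) := by
      have := le_max_right N (v c.2); omega
    rw [e1, e2]
  · intro hc
    refine ⟨0, fun y _ hmem => ?_⟩
    obtain ⟨s, hs⟩ := hmem
    have e1 : s.1.1 + v s.2 = c.1 := by
      have := congrArg (fun p => p.1.1) hs; exact this
    have e2 : s.2 = c.2 := by
      have := congrArg (fun p => p.2) hs; exact this
    rw [e2] at e1
    simp only [sliceSet, Set.mem_setOf_eq] at hc
    omega

lemma gr_translMap (v : Fin n → ℕ) : gr (translMap v) = ∑ i, v i := by
  rw [gr_eq_ncard, missV_translMap, ncard_sliceSet]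

/-! ### setup for the transitivity construction -/

structure TSetup (n : ℕ) (α : QSet n → QSet n) where
  W : Wit α
  hn : 0 < n
  d : ℕ
  hd : 1 ≤ d
  hgr : gr α = d
  ev : Fin d → ℕ × Fin n
  ev_inj : Function.Injective ev
  ev_mem : ∀ j, ev j ∈ MissV α
  ev_surj : ∀ c ∈ MissV α, ∃ j, ev j = c
  eh : Fin d → ℕ × Fin n
  eh_inj : Function.Injective eh
  eh_mem : ∀ j, eh j ∈ MissH α
  eh_surj : ∀ c ∈ MissH α, ∃ j, eh j = c
  Y1 : ℕ
  X1 : ℕ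
  hY1 : ∀ (x y : ℕ) (i : Fin n), Y1 ≤ y →
    ((((x, y), i) : QSet n) ∈ Set.range α ↔ (x, i) ∉ MissV α)
  hX1 : ∀ (x y : ℕ) (i : Fin n), X1 ≤ x →
    ((((x, y), i) : QSet n) ∈ Set.range α ↔ (y, i) ∉ MissH α)
  hMvX : ∀ c ∈ MissV α, c.1 < X1
  hMhY : ∀ c ∈ MissH α, c.1 < Y1
  hdX : d ≤ X1
  hdY : d ≤ Y1

lemma tsetup_exists (W : Wit α) (hn : 0 < n) (d : ℕ) (hd : 1 ≤ d) (hgr : gr α = d) :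
    ∃ S : TSetup n α, S.d = d := by
  have hvfin : (MissV α).Finite := W.missV_finite
  have hhfin : (MissH α).Finite := W.missH_finite
  have hvcard : Nat.card (MissV α) = d := by
    rw [Nat.card_coe_set_eq, ← gr_eq_ncard, hgr]
  have hhcard : Nat.card (MissH α) = d := by
    have := W.missH_ncard
    rw [Nat.card_coe_set_eq]
    omega
  have : Finite (MissV α) := hvfin.to_subtype
  have : Finite (MissH α) := hhfin.to_subtype
  let evE : MissV α ≃ Fin d := Finite.equivFinOfCardEq hvcard
  let ehE : MissH α ≃ Fin d := Finite.equivFinOfCardEq hhcard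
  set X1 : ℕ := max (max W.X1 d) ((hvfin.toFinset.sup (fun c => c.1)) + 1) with hX
  set Y1 : ℕ := max (max W.Y1 d) ((hhfin.toFinset.sup (fun c => c.1)) + 1) with hY
  refine ⟨⟨W, hn, d, hd, hgr,
    fun j => (evE.symm j : _), fun a b h => ?_, fun j => (evE.symm j).2, fun c hc => ?_,
    fun j => (ehE.symm j : _), fun a b h => ?_, fun j => (ehE.symm j).2, fun c hc => ?_,
    Y1, X1, ?_, ?_, ?_, ?_, ?_, ?_⟩, rfl⟩
  · exact evE.symm.injective (Subtype.ext h)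
  · exact ⟨evE ⟨c, hc⟩, by simp⟩
  · exact ehE.symm.injective (Subtype.ext h)
  · exact ⟨ehE ⟨c, hc⟩, by simp⟩
  · intro x y i hy
    exact W.range_iff x y i (le_trans (le_trans (le_max_left _ _) (le_max_left _ _)) hy)
  · intro x y i hx
    exact W.range_iff_row x y i (le_trans (le_trans (le_max_left _ _) (le_max_left _ _)) hx)
  · intro c hc
    have : c.1 ≤ hvfin.toFinset.sup (fun c => c.1) :=
      Finset.le_sup (hvfin.mem_toFinset.mpr hc)
    have h2 : (hvfin.toFinset.sup (fun c => c.1)) + 1 ≤ X1 := le_max_right _ _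
    omega
  · intro c hc
    have : c.1 ≤ hhfin.toFinset.sup (fun c => c.1) :=
      Finset.le_sup (hhfin.mem_toFinset.mpr hc)
    have h2 : (hhfin.toFinset.sup (fun c => c.1)) + 1 ≤ Y1 := le_max_right _ _
    omega
  · exact le_trans (le_trans (le_max_right _ _) (le_max_left _ _)) le_rfl
  · exact le_trans (le_trans (le_max_right _ _) (le_max_left _ _)) le_rfl

namespace TSetup
variable {α : QSet n → QSet n}

def i0 (S : TSetup n α) : Fin n := ⟨0, S.hn⟩

def vd (S : TSetup n α) : Fin n → ℕ := fun i => if i = S.i0 then S.d else 0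

lemma sum_vd (S : TSetup n α) : ∑ i, S.vd i = S.d := by
  simp [vd, Finset.sum_ite_eq']

noncomputable def cv (S : TSetup n α) (x : ℕ) : ℕ × Fin n :=
  if h : x < S.d then S.ev ⟨x, h⟩ else (0, S.i0)

noncomputable def rh (S : TSetup n α) (y : ℕ) : ℕ × Fin n :=
  if h : y < S.d then S.eh ⟨y, h⟩ else (0, S.i0)

lemma cv_mem (S : TSetup n α) (x : ℕ) (hx : x < S.d) : S.cv x ∈ MissV α := by
  rw [cv, dif_pos hx]; exact S.ev_mem _

lemma rh_mem (S : TSetup n α) (y : ℕ) (hy : y < S.d) : S.rh y ∈ MissH α := by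
  rw [rh, dif_pos hy]; exact S.eh_mem _

lemma cv_inj (S : TSetup n α) (x x' : ℕ) (hx : x < S.d) (hx' : x' < S.d)
    (h : S.cv x = S.cv x') : x = x' := by
  simp only [cv] at h
  rw [dif_pos hx, dif_pos hx'] at h
  have := congrArg Fin.val (S.ev_inj h)
  simpa using this

lemma rh_inj (S : TSetup n α) (y y' : ℕ) (hy : y < S.d) (hy' : y' < S.d)
    (h : S.rh y = S.rh y') : y = y' := by
  simp only [rh] at h
  rw [dif_pos hy, dif_pos hy'] at h
  have := congrArg Fin.val (S.eh_inj h)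
  simpa using this

noncomputable def c0 (S : TSetup n α) : ℕ × Fin n := S.cv 0

def cond1 (S : TSetup n α) (p : QSet n) : Prop := S.vd p.2 ≤ p.1.1 ∧ S.vd p.2 ≤ p.1.2
def cond2 (S : TSetup n α) (A : ℕ) (p : QSet n) : Prop := p.1.1 = 0 ∧ A ≤ p.1.2
def cond3 (S : TSetup n α) (p : QSet n) : Prop := p.1.1 < S.d ∧ S.Y1 ≤ p.1.2 ∧ p.1.1 ≠ 0
def cond4 (S : TSetup n α) (p : QSet n) : Prop := p.1.2 < S.d ∧ S.X1 ≤ p.1.1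

lemma not_cond1 (S : TSetup n α) (p : QSet n) (h : ¬ S.cond1 p) :
    p.2 = S.i0 ∧ (p.1.1 < S.d ∨ p.1.2 < S.d) := by
  by_cases hp : p.2 = S.i0
  · refine ⟨hp, ?_⟩
    rw [cond1, vd, if_pos hp] at h
    omega
  · exfalso; exact h ⟨by rw [vd, if_neg hp]; omega, by rw [vd, if_neg hp]; omega⟩

lemma cond1_translMap (S : TSetup n α) (s : QSet n) : S.cond1 (translMap S.vd s) := by
  refine ⟨?_, ?_⟩ <;> · show S.vd s.2 ≤ _ + S.vd s.2; omega

def SS1 (S : TSetup n α) : Set (QSet n) := {p | S.cond1 p}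
def SS2 (S : TSetup n α) (A : ℕ) : Set (QSet n) :=
  {p | ¬ S.cond1 p ∧ (S.cond2 A p ∨ S.cond3 p)}
def SS3 (S : TSetup n α) (A : ℕ) : Set (QSet n) :=
  {p | ¬ S.cond1 p ∧ ¬ S.cond2 A p ∧ ¬ S.cond3 p ∧ S.cond4 p}
def SS4 (S : TSetup n α) (A : ℕ) : Set (QSet n) :=
  {p | ¬ S.cond1 p ∧ ¬ S.cond2 A p ∧ ¬ S.cond3 p ∧ ¬ S.cond4 p}

def TT2 (S : TSetup n α) (B : ℕ) : Set (QSet n) :=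
  {q | ∃ x < S.d, (q.1.1, q.2) = S.cv x ∧ (if x = 0 then B else S.Y1) ≤ q.1.2}
def TT3 (S : TSetup n α) : Set (QSet n) :=
  {q | ∃ y < S.d, (q.1.2, q.2) = S.rh y ∧ S.X1 ≤ q.1.1}
def TT4 (S : TSetup n α) (B : ℕ) : Set (QSet n) := (Set.range α ∪ S.TT2 B ∪ S.TT3)ᶜ

open scoped Classical in
noncomputable def gmap (S : TSetup n α) (A B : ℕ) (φ : QSet n → QSet n) : QSet n → QSet n :=
  fun p =>
    if S.cond1 p then α ((p.1.1 - S.vd p.2, p.1.2 - S.vd p.2), p.2)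
    else if S.cond2 A p then ((S.c0.1, p.1.2 - A + B), S.c0.2)
    else if S.cond3 p then (((S.cv p.1.1).1, p.1.2), (S.cv p.1.1).2)
    else if S.cond4 p then ((p.1.1, (S.rh p.1.2).1), (S.rh p.1.2).2)
    else φ p

variable (S : TSetup n α) (A B : ℕ) (φ : QSet n → QSet n)

lemma gmap_eq1 (p : QSet n) (h : S.cond1 p) :
    S.gmap A B φ p = α ((p.1.1 - S.vd p.2, p.1.2 - S.vd p.2), p.2) := by
  rw [gmap, if_pos h]

lemma gmap_eq2 (p : QSet n) (h1 : ¬ S.cond1 p) (h2 : S.cond2 A p) :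
    S.gmap A B φ p = ((S.c0.1, p.1.2 - A + B), S.c0.2) := by
  rw [gmap, if_neg h1, if_pos h2]

lemma gmap_eq3 (p : QSet n) (h1 : ¬ S.cond1 p) (h2 : ¬ S.cond2 A p) (h3 : S.cond3 p) :
    S.gmap A B φ p = (((S.cv p.1.1).1, p.1.2), (S.cv p.1.1).2) := by
  rw [gmap, if_neg h1, if_neg h2, if_pos h3]

lemma gmap_eq4 (p : QSet n) (h1 : ¬ S.cond1 p) (h2 : ¬ S.cond2 A p) (h3 : ¬ S.cond3 p)
    (h4 : S.cond4 p) : S.gmap A B φ p = ((p.1.1, (S.rh p.1.2).1), (S.rh p.1.2).2) := by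
  rw [gmap, if_neg h1, if_neg h2, if_neg h3, if_pos h4]

lemma gmap_eq5 (p : QSet n) (h : p ∈ S.SS4 A) : S.gmap A B φ p = φ p := by
  obtain ⟨h1, h2, h3, h4⟩ := h
  rw [gmap, if_neg h1, if_neg h2, if_neg h3, if_neg h4]

lemma bijOn1 : Set.BijOn (S.gmap A B φ) S.SS1 (Set.range α) := by
  refine ⟨fun p hp => ?_, fun p hp p' hp' h => ?_, fun q hq => ?_⟩
  · rw [S.gmap_eq1 A B φ p hp]
    exact ⟨_, rfl⟩
  · rw [S.gmap_eq1 A B φ p hp, S.gmap_eq1 A B φ p' hp'] at h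
    have h' := S.W.inj h
    obtain ⟨hp1, hp2⟩ := hp
    obtain ⟨hp1', hp2'⟩ := hp'
    have e1 : p.1.1 - S.vd p.2 = p'.1.1 - S.vd p'.2 := congrArg (fun r => r.1.1) h'
    have e2 : p.1.2 - S.vd p.2 = p'.1.2 - S.vd p'.2 := congrArg (fun r => r.1.2) h'
    have e3 : p.2 = p'.2 := congrArg (fun r => r.2) h'
    have e4 : S.vd p.2 = S.vd p'.2 := by rw [e3]
    have : p.1 = p'.1 := Prod.ext (by omega) (by omega)
    exact Prod.ext this e3
  · obtain ⟨s, rfl⟩ := hq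
    refine ⟨translMap S.vd s, S.cond1_translMap s, ?_⟩
    rw [S.gmap_eq1 A B φ _ (S.cond1_translMap s)]
    have e : ((((translMap S.vd s).1.1 - S.vd (translMap S.vd s).2,
        (translMap S.vd s).1.2 - S.vd (translMap S.vd s).2), (translMap S.vd s).2) : QSet n)
        = s := by
      show ((s.1.1 + S.vd s.2 - S.vd s.2, s.1.2 + S.vd s.2 - S.vd s.2), s.2) = s
      have e1 : s.1.1 + S.vd s.2 - S.vd s.2 = s.1.1 := by omega
      have e2 : s.1.2 + S.vd s.2 - S.vd s.2 = s.1.2 := by omega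
      rw [e1, e2]
    rw [e]

lemma vd_i0' (S : TSetup n α) : S.vd S.i0 = S.d := by simp [vd]

lemma cond1_i0' (S : TSetup n α) (x y : ℕ) :
    S.cond1 ((x, y), S.i0) ↔ (S.d ≤ x ∧ S.d ≤ y) := by
  show S.vd S.i0 ≤ x ∧ S.vd S.i0 ≤ y ↔ _
  rw [S.vd_i0']

lemma bijOn2 (hB : S.Y1 ≤ B) : Set.BijOn (S.gmap A B φ) (S.SS2 A) (S.TT2 B) := by
  have h0d : 0 < S.d := S.hd
  refine ⟨fun p hp => ?_, fun p hp p' hp' h => ?_, fun q hq => ?_⟩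
  · obtain ⟨h1, h2⟩ := hp
    rcases h2 with h2 | h3
    · rw [S.gmap_eq2 A B φ p h1 h2]
      refine ⟨0, h0d, rfl, ?_⟩
      rw [if_pos rfl]
      show B ≤ p.1.2 - A + B
      have := h2.2
      omega
    · have h2' : ¬ S.cond2 A p := fun hc => h3.2.2 hc.1
      rw [S.gmap_eq3 A B φ p h1 h2' h3]
      exact ⟨p.1.1, h3.1, rfl, by rw [if_neg h3.2.2]; exact h3.2.1⟩
  · have hi : p.2 = S.i0 := (S.not_cond1 p hp.1).1
    have hi' : p'.2 = S.i0 := (S.not_cond1 p' hp'.1).1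
    obtain ⟨h1, h2⟩ := hp
    obtain ⟨h1', h2'⟩ := hp'
    rcases h2 with h2 | h3 <;> rcases h2' with h2' | h3'
    · rw [S.gmap_eq2 A B φ p h1 h2, S.gmap_eq2 A B φ p' h1' h2'] at h
      have e2 : p.1.2 - A + B = p'.1.2 - A + B := congrArg (fun r => r.1.2) h
      have : p.1 = p'.1 := Prod.ext (h2.1.trans h2'.1.symm) (by
        have := h2.2; have := h2'.2; omega)
      exact Prod.ext this (hi.trans hi'.symm)
    · exfalso
      rw [S.gmap_eq2 A B φ p h1 h2,
        S.gmap_eq3 A B φ p' h1' (fun hc => h3'.2.2 hc.1) h3'] at h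
      have e1 : S.c0.1 = (S.cv p'.1.1).1 := congrArg (fun r => r.1.1) h
      have e3 : S.c0.2 = (S.cv p'.1.1).2 := congrArg (fun r => r.2) h
      exact h3'.2.2 (S.cv_inj 0 p'.1.1 h0d h3'.1 (Prod.ext e1 e3)).symm
    · exfalso
      rw [S.gmap_eq2 A B φ p' h1' h2',
        S.gmap_eq3 A B φ p h1 (fun hc => h3.2.2 hc.1) h3] at h
      have e1 : (S.cv p.1.1).1 = S.c0.1 := congrArg (fun r => r.1.1) h
      have e3 : (S.cv p.1.1).2 = S.c0.2 := congrArg (fun r => r.2) h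
      exact h3.2.2 (S.cv_inj p.1.1 0 h3.1 h0d (Prod.ext e1 e3))
    · rw [S.gmap_eq3 A B φ p h1 (fun hc => h3.2.2 hc.1) h3,
        S.gmap_eq3 A B φ p' h1' (fun hc => h3'.2.2 hc.1) h3'] at h
      have e1 : (S.cv p.1.1).1 = (S.cv p'.1.1).1 := congrArg (fun r => r.1.1) h
      have e2 : p.1.2 = p'.1.2 := congrArg (fun r => r.1.2) h
      have e3 : (S.cv p.1.1).2 = (S.cv p'.1.1).2 := congrArg (fun r => r.2) h
      have ex : p.1.1 = p'.1.1 := S.cv_inj _ _ h3.1 h3'.1 (Prod.ext e1 e3)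
      exact Prod.ext (Prod.ext ex e2) (hi.trans hi'.symm)
  · obtain ⟨x, hx, hpair, hy⟩ := hq
    have hq1 : q.1.1 = (S.cv x).1 := congrArg Prod.fst hpair
    have hq2 : q.2 = (S.cv x).2 := congrArg Prod.snd hpair
    by_cases hx0 : x = 0
    · subst hx0
      rw [if_pos rfl] at hy
      have hnc1 : ¬ S.cond1 ((0, q.1.2 - B + A), S.i0) := by
        rw [S.cond1_i0']
        omega
      have hc2 : S.cond2 A ((0, q.1.2 - B + A), S.i0) :=
        ⟨rfl, by show A ≤ q.1.2 - B + A; omega⟩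
      refine ⟨((0, q.1.2 - B + A), S.i0), ⟨hnc1, Or.inl hc2⟩, ?_⟩
      · rw [S.gmap_eq2 A B φ _ hnc1 hc2]
        show ((S.c0.1, q.1.2 - B + A - A + B), S.c0.2) = q
        have e : q.1.2 - B + A - A + B = q.1.2 := by omega
        rw [e]
        exact (Prod.ext (Prod.ext hq1.symm rfl) hq2.symm)
    · rw [if_neg hx0] at hy
      have hnc1 : ¬ S.cond1 ((x, q.1.2), S.i0) := by
        rw [S.cond1_i0']
        omega
      refine ⟨((x, q.1.2), S.i0), ⟨hnc1, Or.inr ⟨hx, hy, hx0⟩⟩, ?_⟩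
      · have hnc2 : ¬ S.cond2 A ((x, q.1.2), S.i0) := fun hc => hx0 hc.1
        rw [S.gmap_eq3 A B φ _ hnc1 hnc2 ⟨hx, hy, hx0⟩]
        exact (Prod.ext (Prod.ext hq1.symm rfl) hq2.symm)

lemma bijOn3 : Set.BijOn (S.gmap A B φ) (S.SS3 A) S.TT3 := by
  refine ⟨fun p hp => ?_, fun p hp p' hp' h => ?_, fun q hq => ?_⟩
  · obtain ⟨h1, h2, h3, h4⟩ := hp
    rw [S.gmap_eq4 A B φ p h1 h2 h3 h4]
    exact ⟨p.1.2, h4.1, rfl, h4.2⟩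
  · have hi : p.2 = S.i0 := (S.not_cond1 p hp.1).1
    have hi' : p'.2 = S.i0 := (S.not_cond1 p' hp'.1).1
    obtain ⟨h1, h2, h3, h4⟩ := hp
    obtain ⟨h1', h2', h3', h4'⟩ := hp'
    rw [S.gmap_eq4 A B φ p h1 h2 h3 h4, S.gmap_eq4 A B φ p' h1' h2' h3' h4'] at h
    have e1 : p.1.1 = p'.1.1 := congrArg (fun r => r.1.1) h
    have e2 : (S.rh p.1.2).1 = (S.rh p'.1.2).1 := congrArg (fun r => r.1.2) h
    have e3 : (S.rh p.1.2).2 = (S.rh p'.1.2).2 := congrArg (fun r => r.2) h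
    have ey : p.1.2 = p'.1.2 := S.rh_inj _ _ h4.1 h4'.1 (Prod.ext e2 e3)
    exact Prod.ext (Prod.ext e1 ey) (hi.trans hi'.symm)
  · obtain ⟨y, hy, hpair, hx⟩ := hq
    have hq2 : q.1.2 = (S.rh y).1 := congrArg Prod.fst hpair
    have hq3 : q.2 = (S.rh y).2 := congrArg Prod.snd hpair
    have hnc1 : ¬ S.cond1 ((q.1.1, y), S.i0) := by
      rw [S.cond1_i0']
      omega
    have hX1pos : 1 ≤ S.X1 := le_trans S.hd S.hdX
    have hnc2 : ¬ S.cond2 A ((q.1.1, y), S.i0) := by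
      intro hc
      have := hc.1
      simp only at this
      omega
    have hnc3 : ¬ S.cond3 ((q.1.1, y), S.i0) := by
      intro hc
      have := hc.1
      simp only at this
      have := S.hdX
      omega
    refine ⟨((q.1.1, y), S.i0), ⟨hnc1, hnc2, hnc3, ⟨hy, hx⟩⟩, ?_⟩
    rw [S.gmap_eq4 A B φ _ hnc1 hnc2 hnc3 ⟨hy, hx⟩]
    exact (Prod.ext (Prod.ext rfl hq2.symm) hq3.symm)

lemma bijOn4 (hφ : Set.BijOn φ (S.SS4 A) (S.TT4 B)) :
    Set.BijOn (S.gmap A B φ) (S.SS4 A) (S.TT4 B) :=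
  hφ.congr (fun p hp => (S.gmap_eq5 A B φ p hp).symm)

lemma TT2_not_range (hB : S.Y1 ≤ B) (q : QSet n) (hq : q ∈ S.TT2 B) :
    q ∉ Set.range α := by
  obtain ⟨x, hx, hpair, hy⟩ := hq
  have hy' : S.Y1 ≤ q.1.2 := by
    by_cases h0 : x = 0
    · rw [if_pos h0] at hy; omega
    · rwa [if_neg h0] at hy
  have hmem : ((q.1.1, q.2) : ℕ × Fin n) ∈ MissV α := hpair ▸ S.cv_mem x hx
  intro hr
  exact (S.hY1 q.1.1 q.1.2 q.2 hy').mp hr hmem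

lemma TT3_not_range (q : QSet n) (hq : q ∈ S.TT3) : q ∉ Set.range α := by
  obtain ⟨y, hy, hpair, hx⟩ := hq
  have hmem : ((q.1.2, q.2) : ℕ × Fin n) ∈ MissH α := hpair ▸ S.rh_mem y hy
  intro hr
  exact (S.hX1 q.1.1 q.1.2 q.2 hx).mp hr hmem

lemma TT2_TT3_disj (q : QSet n) (hq : q ∈ S.TT2 B) (hq' : q ∈ S.TT3) : False := by
  obtain ⟨x, hx, hpair, _⟩ := hq
  obtain ⟨y, hy, _, hxq⟩ := hq'
  have h1 : q.1.1 = (S.cv x).1 := congrArg Prod.fst hpair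
  have h2 := S.hMvX _ (S.cv_mem x hx)
  omega

lemma SS_cover (p : QSet n) : p ∈ S.SS1 ∨ p ∈ S.SS2 A ∨ p ∈ S.SS3 A ∨ p ∈ S.SS4 A := by
  by_cases h1 : S.cond1 p
  · exact Or.inl h1
  by_cases h2 : S.cond2 A p
  · exact Or.inr (Or.inl ⟨h1, Or.inl h2⟩)
  by_cases h3 : S.cond3 p
  · exact Or.inr (Or.inl ⟨h1, Or.inr h3⟩)
  by_cases h4 : S.cond4 p
  · exact Or.inr (Or.inr (Or.inl ⟨h1, h2, h3, h4⟩))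
  · exact Or.inr (Or.inr (Or.inr ⟨h1, h2, h3, h4⟩))

lemma bijOn_gmap (hB : S.Y1 ≤ B) (hφ : Set.BijOn φ (S.SS4 A) (S.TT4 B)) :
    Function.Bijective (S.gmap A B φ) := by
  have hT4 : S.TT4 B = (Set.range α ∪ S.TT2 B ∪ S.TT3)ᶜ := rfl
  have b1 := S.bijOn1 A B φ
  have b2 := S.bijOn2 A B φ hB
  have b3 := S.bijOn3 A B φ
  have b4 := S.bijOn4 A B φ hφ
  -- disjointness of sources is automatic; build up unions
  have d12 : ∀ p ∈ S.SS1, ∀ p' ∈ S.SS2 A, S.gmap A B φ p ≠ S.gmap A B φ p' := by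
    intro p hp p' hp' h
    exact S.TT2_not_range B hB _ (b2.mapsTo hp') (h ▸ b1.mapsTo hp)
  have d13 : ∀ p ∈ S.SS1, ∀ p' ∈ S.SS3 A, S.gmap A B φ p ≠ S.gmap A B φ p' := by
    intro p hp p' hp' h
    exact S.TT3_not_range _ (b3.mapsTo hp') (h ▸ b1.mapsTo hp)
  have d14 : ∀ p ∈ S.SS1, ∀ p' ∈ S.SS4 A, S.gmap A B φ p ≠ S.gmap A B φ p' := by
    intro p hp p' hp' h
    exact (b4.mapsTo hp') (Or.inl (Or.inl (h ▸ b1.mapsTo hp)))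
  have d23 : ∀ p ∈ S.SS2 A, ∀ p' ∈ S.SS3 A, S.gmap A B φ p ≠ S.gmap A B φ p' := by
    intro p hp p' hp' h
    exact S.TT2_TT3_disj B _ (b2.mapsTo hp) (h ▸ b3.mapsTo hp')
  have d24 : ∀ p ∈ S.SS2 A, ∀ p' ∈ S.SS4 A, S.gmap A B φ p ≠ S.gmap A B φ p' := by
    intro p hp p' hp' h
    exact (b4.mapsTo hp') (Or.inl (Or.inr (h ▸ b2.mapsTo hp)))
  have d34 : ∀ p ∈ S.SS3 A, ∀ p' ∈ S.SS4 A, S.gmap A B φ p ≠ S.gmap A B φ p' := by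
    intro p hp p' hp' h
    exact (b4.mapsTo hp') (Or.inr (h ▸ b3.mapsTo hp))
  rw [← Set.bijOn_univ]
  have hSu : (Set.univ : Set (QSet n)) = (S.SS1 ∪ S.SS2 A) ∪ (S.SS3 A ∪ S.SS4 A) := by
    ext p
    simp only [Set.mem_univ, true_iff, Set.mem_union]
    rcases S.SS_cover A p with h | h | h | h
    exacts [Or.inl (Or.inl h), Or.inl (Or.inr h), Or.inr (Or.inl h), Or.inr (Or.inr h)]
  have hTu : (Set.univ : Set (QSet n)) = (Set.range α ∪ S.TT2 B) ∪ (S.TT3 ∪ S.TT4 B) := by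
    ext q
    simp only [Set.mem_univ, true_iff, Set.mem_union]
    by_cases h1 : q ∈ Set.range α
    · exact Or.inl (Or.inl h1)
    by_cases h2 : q ∈ S.TT2 B
    · exact Or.inl (Or.inr h2)
    by_cases h3 : q ∈ S.TT3
    · exact Or.inr (Or.inl h3)
    · refine Or.inr (Or.inr ?_)
      rw [hT4]
      intro hc
      rcases hc with (hc | hc) | hc
      exacts [h1 hc, h2 hc, h3 hc]
  have b12 : Set.BijOn (S.gmap A B φ) (S.SS1 ∪ S.SS2 A) (Set.range α ∪ S.TT2 B) := by
    refine b1.union b2 ?_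
    intro p hp p' hp' h
    rcases hp with hp | hp <;> rcases hp' with hp' | hp'
    · exact b1.injOn hp hp' h
    · exact absurd h (d12 p hp p' hp')
    · exact absurd h.symm (d12 p' hp' p hp)
    · exact b2.injOn hp hp' h
  have b34 : Set.BijOn (S.gmap A B φ) (S.SS3 A ∪ S.SS4 A) (S.TT3 ∪ S.TT4 B) := by
    refine b3.union b4 ?_
    intro p hp p' hp' h
    rcases hp with hp | hp <;> rcases hp' with hp' | hp'
    · exact b3.injOn hp hp' h
    · exact absurd h (d34 p hp p' hp')
    · exact absurd h.symm (d34 p' hp' p hp)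
    · exact b4.injOn hp hp' h
  have final : Set.BijOn (S.gmap A B φ) (S.SS1 ∪ S.SS2 A ∪ (S.SS3 A ∪ S.SS4 A))
      (Set.range α ∪ S.TT2 B ∪ (S.TT3 ∪ S.TT4 B)) := by
    refine b12.union b34 ?_
    intro p hp p' hp' h
    rcases hp with hp | hp <;> rcases hp' with hp' | hp'
    <;> first
      | exact b12.injOn hp hp' h
      | exact b34.injOn hp hp' h
      | skip
    · rcases hp with hp | hp <;> rcases hp' with hp' | hp'
      exacts [absurd h (d13 p hp p' hp'), absurd h (d14 p hp p' hp'),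
        absurd h (d23 p hp p' hp'), absurd h (d24 p hp p' hp')]
    · rcases hp with hp | hp <;> rcases hp' with hp' | hp'
      exacts [absurd h.symm (d13 p' hp' p hp), absurd h.symm (d23 p' hp' p hp),
        absurd h.symm (d14 p' hp' p hp), absurd h.symm (d24 p' hp' p hp)]
  rwa [← hSu, ← hTu] at final

lemma vd_le_d (S : TSetup n α) (i : Fin n) : S.vd i ≤ S.d := by
  by_cases h : i = S.i0 <;> simp [vd, h]

lemma mcond_gmap (hbij : Function.Injective (S.gmap A B φ)) : MCond (S.gmap A B φ) := by
  refine ⟨hbij, S.W.x₀ + S.d + S.X1 + 1, S.W.y₀ + S.d + S.Y1 + A + 1,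
    fun i => S.W.m i - S.vd i, ?_, ?_, ?_⟩
  · intro x y i hx hy
    have hvd := S.vd_le_d i
    have hc1 : S.cond1 ((x, y), i) := ⟨by show S.vd i ≤ x; omega, by show S.vd i ≤ y; omega⟩
    have e : S.gmap A B φ ((x, y), i) = α ((x - S.vd i, y - S.vd i), i) :=
      S.gmap_eq1 A B φ _ hc1
    rw [e]
    obtain ⟨g1, g2, g3⟩ := S.W.b1 (x - S.vd i) (y - S.vd i) i (by omega) (by omega)
    refine ⟨g1, ?_, ?_⟩
    · show ((α ((x - S.vd i, y - S.vd i), i)).1.1 : ℤ) = (x : ℤ) + (S.W.m i - (S.vd i : ℤ))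
      omega
    · show ((α ((x - S.vd i, y - S.vd i), i)).1.2 : ℤ) = (y : ℤ) + (S.W.m i - (S.vd i : ℤ))
      omega
  · intro x i
    by_cases hni : i = S.i0 ∧ x < S.d
    · obtain ⟨hi, hxd⟩ := hni
      subst hi
      by_cases hx0 : x = 0
      · subst hx0
        refine ⟨(B : ℤ) - (A : ℤ), S.c0.1, S.c0.2, fun y hy => ?_⟩
        have hnc1 : ¬ S.cond1 ((0, y), S.i0) := by rw [S.cond1_i0']; have := S.hd; omega
        have hc2 : S.cond2 A ((0, y), S.i0) := ⟨rfl, by show A ≤ y; omega⟩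
        have e : S.gmap A B φ ((0, y), S.i0) = ((S.c0.1, y - A + B), S.c0.2) :=
          S.gmap_eq2 A B φ _ hnc1 hc2
        rw [e]
        exact ⟨rfl, rfl, by push_cast; omega⟩
      · refine ⟨0, (S.cv x).1, (S.cv x).2, fun y hy => ?_⟩
        have hnc1 : ¬ S.cond1 ((x, y), S.i0) := by rw [S.cond1_i0']; omega
        have hnc2 : ¬ S.cond2 A ((x, y), S.i0) := fun hc => hx0 hc.1
        have hc3 : S.cond3 ((x, y), S.i0) := ⟨hxd, by show S.Y1 ≤ y; omega, hx0⟩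
        have e : S.gmap A B φ ((x, y), S.i0) = (((S.cv x).1, y), (S.cv x).2) :=
          S.gmap_eq3 A B φ _ hnc1 hnc2 hc3
        rw [e]
        refine ⟨rfl, rfl, ?_⟩
        show ((y : ℤ)) = (y : ℤ) + 0
        omega
    · have hvx : S.vd i ≤ x := by
        by_cases h : i = S.i0
        · have : ¬ x < S.d := fun hc => hni ⟨h, hc⟩
          rw [h, S.vd_i0']; omega
        · simp [vd, h]
      obtain ⟨q, x', i', hq⟩ := S.W.b2a (x - S.vd i) i
      refine ⟨q - (S.vd i : ℤ), x', i', fun y hy => ?_⟩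
      have hvd := S.vd_le_d i
      have hc1 : S.cond1 ((x, y), i) := ⟨hvx, by show S.vd i ≤ y; omega⟩
      have e : S.gmap A B φ ((x, y), i) = α ((x - S.vd i, y - S.vd i), i) :=
        S.gmap_eq1 A B φ _ hc1
      rw [e]
      obtain ⟨a1, a2, a3⟩ := hq (y - S.vd i) (by omega)
      exact ⟨a1, a2, by omega⟩
  · intro y i
    by_cases hni : i = S.i0 ∧ y < S.d
    · obtain ⟨hi, hyd⟩ := hni
      subst hi
      refine ⟨0, (S.rh y).1, (S.rh y).2, fun x hx => ?_⟩
      have hX1pos : 1 ≤ S.X1 := le_trans S.hd S.hdX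
      have hnc1 : ¬ S.cond1 ((x, y), S.i0) := by rw [S.cond1_i0']; omega
      have hnc2 : ¬ S.cond2 A ((x, y), S.i0) := by
        intro hc
        have : x = 0 := hc.1
        have := S.hdX
        omega
      have hnc3 : ¬ S.cond3 ((x, y), S.i0) := by
        intro hc
        have : x < S.d := hc.1
        have := S.hdX
        omega
      have hc4 : S.cond4 ((x, y), S.i0) := ⟨hyd, by show S.X1 ≤ x; omega⟩
      have e : S.gmap A B φ ((x, y), S.i0) = ((x, (S.rh y).1), (S.rh y).2) :=
        S.gmap_eq4 A B φ _ hnc1 hnc2 hnc3 hc4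
      rw [e]
      refine ⟨rfl, rfl, ?_⟩
      show ((x : ℤ)) = (x : ℤ) + 0
      omega
    · have hvy : S.vd i ≤ y := by
        by_cases h : i = S.i0
        · have : ¬ y < S.d := fun hc => hni ⟨h, hc⟩
          rw [h, S.vd_i0']; omega
        · simp [vd, h]
      obtain ⟨r, y', i', hr⟩ := S.W.b2b (y - S.vd i) i
      refine ⟨r - (S.vd i : ℤ), y', i', fun x hx => ?_⟩
      have hvd := S.vd_le_d i
      have hc1 : S.cond1 ((x, y), i) := ⟨by show S.vd i ≤ x; omega, hvy⟩
      have e : S.gmap A B φ ((x, y), i) = α ((x - S.vd i, y - S.vd i), i) :=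
        S.gmap_eq1 A B φ _ hc1
      rw [e]
      obtain ⟨a1, a2, a3⟩ := hr (x - S.vd i) (by omega)
      exact ⟨a1, a2, by omega⟩

lemma gmap_translMap (s : QSet n) : S.gmap A B φ (translMap S.vd s) = α s := by
  have e : S.gmap A B φ (translMap S.vd s) =
      α (((translMap S.vd s).1.1 - S.vd s.2, (translMap S.vd s).1.2 - S.vd s.2), s.2) :=
    S.gmap_eq1 A B φ _ (S.cond1_translMap s)
  rw [e]
  have e1 : (translMap S.vd s).1.1 - S.vd s.2 = s.1.1 := by
    show s.1.1 + S.vd s.2 - S.vd s.2 = s.1.1; omega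
  have e2 : (translMap S.vd s).1.2 - S.vd s.2 = s.1.2 := by
    show s.1.2 + S.vd s.2 - S.vd s.2 = s.1.2; omega
  rw [e1, e2]

lemma box_finite (a b : ℕ) : ({p : QSet n | p.1.1 < a ∧ p.1.2 < b}).Finite := by
  have : ({p : QSet n | p.1.1 < a ∧ p.1.2 < b}) ⊆
      (Set.Iio a ×ˢ Set.Iio b) ×ˢ (Set.univ : Set (Fin n)) := by
    rintro ⟨⟨x, y⟩, i⟩ ⟨h1, h2⟩
    exact ⟨⟨h1, h2⟩, trivial⟩
  exact Set.Finite.subset (((Set.finite_Iio a).prod (Set.finite_Iio b)).prod (Set.finite_univ)) this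

lemma SS4_subset : S.SS4 A ⊆ {p : QSet n | p.1.1 < S.X1 ∧ p.1.2 < max S.Y1 A} := by
  rintro p ⟨h1, h2, h3, h4⟩
  obtain ⟨hi, hxy⟩ := S.not_cond1 p h1
  have hdX := S.hdX
  have hdY := S.hdY
  rcases hxy with hx | hy
  · constructor
    · omega
    · by_cases h0 : p.1.1 = 0
      · have : ¬ (A ≤ p.1.2) := fun hc => h2 ⟨h0, hc⟩
        omega
      · have : ¬ (S.Y1 ≤ p.1.2) := fun hc => h3 ⟨hx, hc, h0⟩
        omega
  · constructor
    · by_contra hc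
      exact h4 ⟨hy, by omega⟩
    · omega

lemma SS4_finite : (S.SS4 A).Finite :=
  Set.Finite.subset (box_finite S.X1 (max S.Y1 A)) (S.SS4_subset A)

def segS (S : TSetup n α) (A : ℕ) : Set (QSet n) :=
  {p | p.1.1 = 0 ∧ p.2 = S.i0 ∧ p.1.2 < A}

lemma segS_ncard : (S.segS A).ncard = A := by
  have he : S.segS A = ↑((Finset.range A).image (fun y => (((0, y), S.i0) : QSet n))) := by
    ext p
    simp only [segS, Set.mem_setOf_eq, Finset.coe_image, Set.mem_image, Finset.mem_coe,
      Finset.mem_range]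
    constructor
    · rintro ⟨h1, h2, h3⟩
      refine ⟨p.1.2, h3, ?_⟩
      have : p = ((p.1.1, p.1.2), p.2) := rfl
      rw [this, h1, h2]
    · rintro ⟨y, hy, rfl⟩
      exact ⟨rfl, rfl, hy⟩
  rw [he, Set.ncard_coe_finset, Finset.card_image_of_injective, Finset.card_range]
  intro a b h
  exact congrArg (fun p : QSet n => p.1.2) h

lemma SS4_split (hd1 : 1 ≤ S.d) : S.SS4 A = S.SS4 0 ∪ S.segS A := by
  have hX1pos : 1 ≤ S.X1 := le_trans S.hd S.hdX
  ext p
  by_cases hp : p.1.1 = 0 ∧ p.2 = S.i0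
  · obtain ⟨hp1, hp2⟩ := hp
    have hpe : p = ((0, p.1.2), S.i0) := by
      have : p = ((p.1.1, p.1.2), p.2) := rfl
      rw [this, hp1, hp2]
    have hnc1 : ¬ S.cond1 p := by
      rw [hpe, S.cond1_i0']
      omega
    have hnc3 : ¬ S.cond3 p := fun hc => hc.2.2 hp1
    have hnc4 : ¬ S.cond4 p := fun hc => by have := hc.2; omega
    constructor
    · rintro ⟨_, h2, _, _⟩
      right
      exact ⟨hp1, hp2, by by_contra hc; exact h2 ⟨hp1, by omega⟩⟩
    · rintro (⟨_, h2, _, _⟩ | ⟨_, _, h3⟩)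
      · exact absurd ⟨hp1, Nat.zero_le _⟩ h2
      · exact ⟨hnc1, fun hc => by have := hc.2; omega, hnc3, hnc4⟩
  · have hseg : p ∉ S.segS A := fun hc => hp ⟨hc.1, hc.2.1⟩
    constructor
    · rintro ⟨h1, h2, h3, h4⟩
      left
      refine ⟨h1, ?_, h3, h4⟩
      rintro ⟨h0, _⟩
      exact hp ⟨h0, (S.not_cond1 p h1).1⟩
    · rintro (⟨h1, h2, h3, h4⟩ | hs)
      · refine ⟨h1, ?_, h3, h4⟩
        rintro ⟨h0, _⟩
        exact hp ⟨h0, (S.not_cond1 p h1).1⟩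
      · exact absurd hs hseg

lemma segS_disj : Disjoint (S.SS4 0) (S.segS A) := by
  rw [Set.disjoint_right]
  rintro p ⟨h1, h2, _⟩ ⟨_, hc2, _, _⟩
  exact hc2 ⟨h1, Nat.zero_le _⟩

def segT (S : TSetup n α) (B : ℕ) : Set (QSet n) :=
  {q | q.1.1 = S.c0.1 ∧ q.2 = S.c0.2 ∧ S.Y1 ≤ q.1.2 ∧ q.1.2 < B}

lemma segT_ncard (hB : S.Y1 ≤ B) : (S.segT B).ncard = B - S.Y1 := by
  have he : S.segT B = ↑((Finset.Ico S.Y1 B).image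
      (fun y => (((S.c0.1, y), S.c0.2) : QSet n))) := by
    ext q
    simp only [segT, Set.mem_setOf_eq, Finset.coe_image, Set.mem_image, Finset.mem_coe,
      Finset.mem_Ico]
    constructor
    · rintro ⟨h1, h2, h3, h4⟩
      refine ⟨q.1.2, ⟨h3, h4⟩, ?_⟩
      have : q = ((q.1.1, q.1.2), q.2) := rfl
      rw [this, h1, h2]
    · rintro ⟨y, hy, rfl⟩
      exact ⟨rfl, rfl, hy.1, hy.2⟩
  rw [he, Set.ncard_coe_finset, Finset.card_image_of_injective, Nat.card_Ico]
  intro a b h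
  exact congrArg (fun p : QSet n => p.1.2) h

lemma c0_mem : S.c0 ∈ MissV α := S.cv_mem 0 S.hd

lemma col_c0_not_range (y : ℕ) (hy : S.Y1 ≤ y) :
    (((S.c0.1, y), S.c0.2) : QSet n) ∉ Set.range α := by
  intro hr
  exact (S.hY1 S.c0.1 y S.c0.2 hy).mp hr S.c0_mem

lemma TT2_c0_iff (q : QSet n) (hq1 : q.1.1 = S.c0.1) (hq2 : q.2 = S.c0.2) (B' : ℕ) :
    q ∈ S.TT2 B' ↔ B' ≤ q.1.2 := by
  constructor
  · rintro ⟨x, hx, hpair, hy⟩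
    have : S.cv x = S.cv 0 := by
      rw [← hpair]
      have : q = ((q.1.1, q.1.2), q.2) := rfl
      show (q.1.1, q.2) = S.c0
      rw [hq1, hq2]
    have hx0 : x = 0 := S.cv_inj x 0 hx S.hd this
    rwa [hx0, if_pos rfl] at hy
  · intro hy
    refine ⟨0, S.hd, ?_, by rw [if_pos rfl]; exact hy⟩
    show (q.1.1, q.2) = S.c0
    rw [hq1, hq2]

lemma TT2_not_c0_iff (q : QSet n) (hq : ¬ (q.1.1 = S.c0.1 ∧ q.2 = S.c0.2)) (B' B'' : ℕ) :
    q ∈ S.TT2 B' → q ∈ S.TT2 B'' := by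
  rintro ⟨x, hx, hpair, hy⟩
  have hx0 : x ≠ 0 := by
    intro h0
    subst h0
    exact hq ⟨congrArg Prod.fst hpair, congrArg Prod.snd hpair⟩
  rw [if_neg hx0] at hy
  exact ⟨x, hx, hpair, by rw [if_neg hx0]; exact hy⟩

lemma TT3_c0_not (q : QSet n) (hq1 : q.1.1 = S.c0.1) : q ∉ S.TT3 := by
  rintro ⟨y, hy, _, hx⟩
  have := S.hMvX _ S.c0_mem
  omega

lemma TT4_split (hB : S.Y1 ≤ B) : S.TT4 B = S.TT4 S.Y1 ∪ S.segT B := by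
  ext q
  by_cases hpair : q.1.1 = S.c0.1 ∧ q.2 = S.c0.2
  · obtain ⟨hq1, hq2⟩ := hpair
    by_cases hy : S.Y1 ≤ q.1.2
    · have hnr : q ∉ Set.range α := by
        have : q = ((q.1.1, q.1.2), q.2) := rfl
        rw [this, hq1, hq2]
        exact S.col_c0_not_range q.1.2 hy
      have hn3 : q ∉ S.TT3 := S.TT3_c0_not q hq1
      constructor
      · intro hq4
        have hn2 : q ∉ S.TT2 B := fun hc => hq4 (Or.inl (Or.inr hc))
        rw [S.TT2_c0_iff q hq1 hq2] at hn2
        exact Or.inr ⟨hq1, hq2, hy, by omega⟩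
      · rintro (hq4 | ⟨_, _, _, hlt⟩)
        · exfalso
          exact hq4 (Or.inl (Or.inr ((S.TT2_c0_iff q hq1 hq2 S.Y1).mpr hy)))
        · intro hc
          rcases hc with (hc | hc) | hc
          · exact hnr hc
          · rw [S.TT2_c0_iff q hq1 hq2] at hc
            omega
          · exact hn3 hc
    · have hn2 : ∀ B' : ℕ, S.Y1 ≤ B' → q ∉ S.TT2 B' := by
        intro B' hB' hc
        rw [S.TT2_c0_iff q hq1 hq2] at hc
        omega
      constructor
      · intro hq4
        left
        intro hc
        rcases hc with (hc | hc) | hc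
        · exact hq4 (Or.inl (Or.inl hc))
        · exact hn2 S.Y1 le_rfl hc
        · exact hq4 (Or.inr hc)
      · rintro (hq4 | ⟨_, _, hge, _⟩)
        · intro hc
          rcases hc with (hc | hc) | hc
          · exact hq4 (Or.inl (Or.inl hc))
          · exact hn2 B hB hc
          · exact hq4 (Or.inr hc)
        · omega
  · have hseg : q ∉ S.segT B := fun hc => hpair ⟨hc.1, hc.2.1⟩
    constructor
    · intro hq4
      left
      intro hc
      rcases hc with (hc | hc) | hc
      · exact hq4 (Or.inl (Or.inl hc))
      · exact hq4 (Or.inl (Or.inr (S.TT2_not_c0_iff q hpair S.Y1 B hc)))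
      · exact hq4 (Or.inr hc)
    · rintro (hq4 | hs)
      · intro hc
        rcases hc with (hc | hc) | hc
        · exact hq4 (Or.inl (Or.inl hc))
        · exact hq4 (Or.inl (Or.inr (S.TT2_not_c0_iff q hpair B S.Y1 hc)))
        · exact hq4 (Or.inr hc)
      · exact absurd hs hseg

lemma segT_disj : Disjoint (S.TT4 S.Y1) (S.segT B) := by
  rw [Set.disjoint_right]
  rintro q ⟨h1, h2, h3, _⟩ hq4
  exact hq4 (Or.inl (Or.inr ((S.TT2_c0_iff q h1 h2 S.Y1).mpr h3)))

lemma TT4_base_subset : S.TT4 S.Y1 ⊆ {q : QSet n | q.1.1 < S.X1 ∧ q.1.2 < S.Y1} := by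
  intro q hq
  have hnr : q ∉ Set.range α := fun hc => hq (Or.inl (Or.inl hc))
  constructor
  · by_contra hx
    push_neg at hx
    have hmem : ((q.1.2, q.2) : ℕ × Fin n) ∈ MissH α := by
      by_contra hm
      exact hnr ((S.hX1 q.1.1 q.1.2 q.2 hx).mpr hm)
    obtain ⟨j, hj⟩ := S.eh_surj _ hmem
    refine hq (Or.inr ⟨j.1, j.2, ?_, hx⟩)
    rw [rh, dif_pos j.2]
    rw [Fin.eta]
    exact hj.symm
  · by_contra hy
    push_neg at hy
    have hmem : ((q.1.1, q.2) : ℕ × Fin n) ∈ MissV α := by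
      by_contra hm
      exact hnr ((S.hY1 q.1.1 q.1.2 q.2 hy).mpr hm)
    obtain ⟨j, hj⟩ := S.ev_surj _ hmem
    refine hq (Or.inl (Or.inr ⟨j.1, j.2, ?_, ?_⟩))
    · rw [cv, dif_pos j.2, Fin.eta]
      exact hj.symm
    · by_cases h0 : j.1 = 0
      · rw [if_pos h0]; exact hy
      · rw [if_neg h0]; exact hy

lemma TT4_base_finite : (S.TT4 S.Y1).Finite :=
  Set.Finite.subset (box_finite S.X1 S.Y1) S.TT4_base_subset

lemma TT4_finite (hB : S.Y1 ≤ B) : (S.TT4 B).Finite := by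
  rw [S.TT4_split B hB]
  refine (S.TT4_base_finite).union ?_
  refine Set.Finite.subset (box_finite (S.c0.1 + 1) B) ?_
  rintro q ⟨h1, _, _, h4⟩
  exact ⟨by omega, h4⟩

lemma exists_g : ∃ g : QSet n → QSet n, MCond g ∧ Function.Bijective g ∧
    ∀ s, g (translMap S.vd s) = α s := by
  classical
  set r := (S.SS4 0).ncard with hr
  set c := (S.TT4 S.Y1).ncard with hc
  set A := c - r with hA
  set B := S.Y1 + (r - c) with hB'
  have hB : S.Y1 ≤ B := by omega
  have h1 : (S.SS4 A).ncard = r + A := by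
    rw [S.SS4_split A S.hd, Set.ncard_union_eq (S.segS_disj A) (S.SS4_finite 0)
      (Set.Finite.subset (box_finite 1 A) ?_), S.segS_ncard]
    rintro p ⟨hp1, _, hp3⟩
    exact ⟨by omega, hp3⟩
  have h2 : (S.TT4 B).ncard = c + (r - c) := by
    rw [S.TT4_split B hB, Set.ncard_union_eq (S.segT_disj B) S.TT4_base_finite
      (Set.Finite.subset (box_finite (S.c0.1 + 1) B) ?_), S.segT_ncard B hB]
    · omega
    · rintro q ⟨hq1, _, _, hq4⟩
      exact ⟨by omega, hq4⟩
  have hcard : (S.SS4 A).ncard = (S.TT4 B).ncard := by omega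
  have hfinS : (S.SS4 A).Finite := S.SS4_finite A
  have hfinT : (S.TT4 B).Finite := S.TT4_finite B hB
  have : Finite (S.SS4 A) := hfinS.to_subtype
  have : Finite (S.TT4 B) := hfinT.to_subtype
  have hccS : Nat.card (S.SS4 A) = (S.SS4 A).ncard := Nat.card_coe_set_eq _
  have hccT : Nat.card (S.TT4 B) = (S.SS4 A).ncard := by
    rw [Nat.card_coe_set_eq, hcard]
  let E1 : S.SS4 A ≃ Fin ((S.SS4 A).ncard) := Finite.equivFinOfCardEq hccS
  let E2 : S.TT4 B ≃ Fin ((S.SS4 A).ncard) := Finite.equivFinOfCardEq hccT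
  let φE : S.SS4 A ≃ S.TT4 B := E1.trans E2.symm
  set φ : QSet n → QSet n := fun p => if h : p ∈ S.SS4 A then (φE ⟨p, h⟩ : QSet n) else p
    with hφdef
  have hφ : Set.BijOn φ (S.SS4 A) (S.TT4 B) := by
    refine ⟨fun p hp => ?_, fun p hp p' hp' h => ?_, fun q hq => ?_⟩
    · rw [hφdef]
      simp only [dif_pos hp]
      exact (φE ⟨p, hp⟩).2
    · rw [hφdef] at h
      simp only [dif_pos hp, dif_pos hp'] at h
      have := φE.injective (Subtype.ext h)
      exact congrArg Subtype.val this
    · refine ⟨(φE.symm ⟨q, hq⟩).1, (φE.symm ⟨q, hq⟩).2, ?_⟩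
      rw [hφdef]
      simp only [dif_pos (φE.symm ⟨q, hq⟩).2]
      have : (⟨(φE.symm ⟨q, hq⟩).1, (φE.symm ⟨q, hq⟩).2⟩ : S.SS4 A) = φE.symm ⟨q, hq⟩ :=
        Subtype.ext rfl
      rw [this, Equiv.apply_symm_apply]
  have hbij : Function.Bijective (S.gmap A B φ) := S.bijOn_gmap A B φ hB hφ
  exact ⟨S.gmap A B φ, S.mcond_gmap A B φ hbij.injective, hbij,
    fun s => S.gmap_translMap A B φ s⟩

end TSetup

lemma translMap_zero' (w : Fin n → ℕ) (hw : ∀ i, w i = 0) (s : QSet n) :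
    translMap w s = s := by
  show ((s.1.1 + w s.2, s.1.2 + w s.2), s.2) = s
  rw [hw s.2]
  show ((s.1.1 + 0, s.1.2 + 0), s.2) = s
  rw [Nat.add_zero, Nat.add_zero]

lemma mcond_id : MCond (id : QSet n → QSet n) := by
  refine ⟨fun a b h => h, 0, 0, 0, ?_, ?_, ?_⟩
  · intro x y i _ _
    exact ⟨rfl, by simp, by simp⟩
  · intro x i
    exact ⟨0, x, i, fun y _ => ⟨rfl, rfl, by simp⟩⟩
  · intro y i
    exact ⟨0, y, i, fun x _ => ⟨rfl, rfl, by simp⟩⟩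

lemma gr_of_zero (γ : QSet 0 → QSet 0) : gr γ = 0 := by
  have : IsEmpty {p : ℕ × Fin 0 // ∃ N : ℕ, ∀ y : ℕ, N ≤ y → ((p.1, y), p.2) ∉ Set.range γ} :=
    ⟨fun p => p.1.2.elim0⟩
  rw [gr]
  exact Nat.card_of_isEmpty

lemma wit_of_mcond {γ : QSet n → QSet n} (h : MCond γ) : Nonempty (Wit γ) := by
  obtain ⟨hinj, x₀, y₀, m, b1, b2a, b2b⟩ := h
  exact ⟨⟨hinj, x₀, y₀, m, b1, b2a, b2b⟩⟩

end SK

namespace SK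

lemma sum_one_le {n : ℕ} {a b : MMon n} (v : Fin n → ℕ)
    (hv : ∀ s, a.1 (translMap v s) = b.1 s) (hne : a ≠ b) : 1 ≤ ∑ i, v i := by
  by_contra h
  push_neg at h
  have h0 : ∀ i, v i = 0 := by
    intro i
    have hz : ∑ i, v i = 0 := by omega
    exact Finset.sum_eq_zero_iff.mp hz i (Finset.mem_univ i)
  refine hne (Subtype.ext (funext fun s => ?_))
  rw [← hv s, translMap_zero' v h0 s]

lemma step_lt {n : ℕ} {a b : MMon n} (h : Mlt a b) : gr a.1 + 1 ≤ gr b.1 := by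
  obtain ⟨⟨v, hv⟩, hne⟩ := h
  obtain ⟨Wa⟩ := wit_of_mcond a.2
  obtain ⟨Wb⟩ := wit_of_mcond b.2
  have h1 := Wa.gr_add_le Wb v hv
  have h2 := sum_one_le v hv hne
  omega

end SK

open SK in
theorem stmt_14' (n k : ℕ) :
    (∀ p (α : Fin (p + 1) → MMon n), IsSimplexNK n k p α → p ≤ k - n) ∧
    ∀ p : ℕ, ∃ R : Set (Fin (p + 1) → MMon n), R.Finite ∧
      (∀ β ∈ R, IsSimplexNK n k p β) ∧
      ∀ α : Fin (p + 1) → MMon n, IsSimplexNK n k p α →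
        ∃ β ∈ R, ∃ g : QSet n → QSet n, MCond g ∧ Function.Bijective g ∧
          ∀ j s, g ((β j).1 s) = (α j).1 s := by
  constructor
  · -- part 1
    intro p αf hS
    have mono : ∀ j : ℕ, ∀ hj : j < p + 1, gr (αf ⟨0, Nat.succ_pos p⟩).1 + j ≤
        gr (αf ⟨j, hj⟩).1 := by
      intro j
      induction j with
      | zero => intro hj; simp
      | succ j ih =>
        intro hj
        have hj' : j < p + 1 := by omega
        have hlt : (⟨j, hj'⟩ : Fin (p + 1)) < ⟨j + 1, hj⟩ := by
          rw [Fin.lt_def]; exact Nat.lt_succ_self j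
        have h1 := step_lt (hS.1 _ _ hlt)
        have h2 := ih hj'
        omega
    have h0 := (hS.2 ⟨0, Nat.succ_pos p⟩).1
    have hp := (hS.2 ⟨p, Nat.lt_succ_self p⟩).2
    have := mono p (Nat.lt_succ_self p)
    omega
  · -- part 2
    intro p
    classical
    set U : Set (Fin (p + 1) → Fin n → ℕ) :=
      {u | (∀ j i, u j i ≤ k) ∧
        (∀ j1 j2 : Fin (p + 1), j1 < j2 → (∀ i, u j1 i ≤ u j2 i) ∧ ∑ i, u j1 i < ∑ i, u j2 i) ∧
        (∀ j, n ≤ ∑ i, u j i ∧ ∑ i, u j i ≤ k)} with hU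
    set Φ : (Fin (p + 1) → Fin n → ℕ) → (Fin (p + 1) → MMon n) :=
      fun u => fun j => (⟨translMap (u j), mcond_translMap (u j)⟩ : MMon n) with hΦ
    refine ⟨Φ '' U, ?_, ?_, ?_⟩
    · -- finiteness
      refine Set.Finite.image Φ (Set.Finite.subset (Set.finite_Icc
        (fun _ _ => 0) (fun _ _ => k)) ?_)
      intro u hu
      refine ⟨fun j => fun i => Nat.zero_le _, fun j => fun i => hu.1 j i⟩
    · -- all elements are simplices
      rintro β ⟨u, hu, rfl⟩
      constructor
      · intro j1 j2 hlt
        obtain ⟨hmono, hstrict⟩ := hu.2.1 j1 j2 hlt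
        constructor
        · refine ⟨fun i => u j2 i - u j1 i, fun s => ?_⟩
          show translMap (u j1) (translMap _ s) = translMap (u j2) s
          rw [translMap_translMap]
          congr 1
          funext i
          show u j1 i + (u j2 i - u j1 i) = u j2 i
          have := hmono i
          omega
        · intro heq
          have hfun : translMap (u j1) = translMap (u j2) := congrArg Subtype.val heq
          have : ∀ i, u j1 i = u j2 i := by
            intro i
            have := congrArg (fun f => (f (((0, 0), i) : QSet n)).1.1) hfun
            simpa [translMap] using this
          have : ∑ i, u j1 i = ∑ i, u j2 i := Finset.sum_congr rfl fun i _ => this i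
          omega
      · intro j
        show n ≤ gr (translMap (u j)) ∧ gr (translMap (u j)) ≤ k
        rw [gr_translMap]
        exact hu.2.2 j
    · -- coverage
      intro αf hS
      by_cases hn0 : n = 0
      · subst hn0
        -- all elements of MMon 0 are equal
        have hall : ∀ a b : MMon 0, a = b := by
          intro a b
          exact Subtype.ext (funext fun s => s.2.elim0)
        rcases p with _ | p'
        · -- p = 0
          have h0U : (0 : Fin (0 + 1) → Fin 0 → ℕ) ∈ U := by
            refine ⟨fun j i => Nat.zero_le _, fun j1 j2 hlt => ?_, fun j => ?_⟩
            · exfalso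
              rw [Fin.lt_def] at hlt
              have := j1.isLt
              have := j2.isLt
              omega
            · simp
          exact ⟨Φ 0, ⟨0, h0U, rfl⟩, id, mcond_id, Function.bijective_id,
            fun j s => s.2.elim0⟩
        · exfalso
          have hlt : (⟨0, by omega⟩ : Fin (p' + 1 + 1)) < ⟨1, by omega⟩ :=
            Fin.mk_lt_mk.mpr Nat.zero_lt_one
          exact (hS.1 _ _ hlt).2 (hall _ _)
      · have hn : 0 < n := Nat.pos_of_ne_zero hn0
        set α0 : MMon n := αf ⟨0, Nat.succ_pos p⟩ with hα0
        set d : ℕ := gr α0.1 with hd'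
        have hnd : n ≤ d := (hS.2 ⟨0, Nat.succ_pos p⟩).1
        have hd1 : 1 ≤ d := le_trans hn hnd
        -- increments
        set v : Fin (p + 1) → Fin n → ℕ := fun j =>
          if h : (⟨0, Nat.succ_pos p⟩ : Fin (p + 1)) < j then (hS.1 _ _ h).1.choose
          else 0 with hvdef
        have hv : ∀ j, ∀ s, α0.1 (translMap (v j) s) = (αf j).1 s := by
          intro j s
          by_cases h : (⟨0, Nat.succ_pos p⟩ : Fin (p + 1)) < j
          · rw [hvdef]
            simp only [dif_pos h]
            exact (hS.1 _ _ h).1.choose_spec s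
          · have hj : j = ⟨0, Nat.succ_pos p⟩ := by
              refine Fin.ext ?_
              show j.val = 0
              simp only [Fin.lt_def] at h
              omega
            rw [hvdef]
            simp only [dif_neg h]
            have e := translMap_zero' (0 : Fin n → ℕ) (fun _ => rfl) s
            rw [e, hj]
        -- pointwise order of increments
        have hvmono : ∀ j1 j2 : Fin (p + 1), j1 < j2 →
            (∀ i, v j1 i ≤ v j2 i) ∧ ∑ i, v j1 i < ∑ i, v j2 i := by
          intro j1 j2 hlt
          obtain ⟨⟨w, hw⟩, hne⟩ := hS.1 j1 j2 hlt
          have hkey : ∀ i, v j2 i = v j1 i + w i := by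
            intro i
            have hpt : ∀ s, translMap (v j2) s = translMap (v j1) (translMap w s) := by
              intro s
              apply α0.2.1
              rw [hv j2 s]
              have h2 : (αf j1).1 (translMap w s) = (αf j2).1 s := hw s
              rw [← h2, hv j1 (translMap w s)]
            have := congrArg (fun r => r.1.1) (hpt (((0, 0), i) : QSet n))
            simp only [translMap] at this
            omega
          have hsumw : 1 ≤ ∑ i, w i := sum_one_le w hw hne
          constructor
          · intro i
            have := hkey i
            omega
          · have e1 : ∑ i, v j2 i = ∑ i, (v j1 i + w i) :=
              Finset.sum_congr rfl fun i _ => hkey i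
            rw [e1, Finset.sum_add_distrib]
            omega
        -- degree bounds along the chain
        have hgrj : ∀ j, d + ∑ i, v j i ≤ gr (αf j).1 := by
          intro j
          obtain ⟨W0⟩ := wit_of_mcond α0.2
          obtain ⟨Wj⟩ := wit_of_mcond (αf j).2
          have := W0.gr_add_le Wj (v j) (hv j)
          omega
        set vd0 : Fin n → ℕ := fun i => if i.val = 0 then d else 0 with hvd0
        have hsum_vd0 : ∑ i, vd0 i = d := by
          rw [hvd0]
          rw [show (fun i : Fin n => if i.val = 0 then d else 0) =
            (fun i : Fin n => if i = ⟨0, hn⟩ then d else 0) by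
              funext i
              by_cases h : i = ⟨0, hn⟩
              · simp [h]
              · have h' : ¬ (i.val = 0) := fun hc => h (Fin.ext hc)
                simp [h, h']]
          simp [Finset.sum_ite_eq']
        set u : Fin (p + 1) → Fin n → ℕ := fun j => vd0 + v j with hu'
        have hsumu : ∀ j, ∑ i, u j i = d + ∑ i, v j i := by
          intro j
          rw [hu']
          show ∑ i, (vd0 i + v j i) = _
          rw [Finset.sum_add_distrib, hsum_vd0]
        have hused : ∀ j, n ≤ ∑ i, u j i ∧ ∑ i, u j i ≤ k := by
          intro j
          rw [hsumu j]
          have h1 := hgrj j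
          have h2 := (hS.2 j).2
          omega
        have huU : u ∈ U := by
          refine ⟨?_, ?_, hused⟩
          · intro j i
            have h1 : u j i ≤ ∑ i', u j i' :=
              Finset.single_le_sum (fun i' _ => Nat.zero_le (u j i')) (Finset.mem_univ i)
            have h2 := (hused j).2
            omega
          · intro j1 j2 hlt
            obtain ⟨hm, hs⟩ := hvmono j1 j2 hlt
            constructor
            · intro i
              show vd0 i + v j1 i ≤ vd0 i + v j2 i
              have := hm i
              omega
            · rw [hsumu j1, hsumu j2]
              omega
        -- the twisting bijection
        obtain ⟨W0⟩ := wit_of_mcond α0.2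
        obtain ⟨S, hSd⟩ := tsetup_exists W0 hn d hd1 hd'.symm
        obtain ⟨g, hg1, hg2, hg3⟩ := S.exists_g
        have hvd : S.vd = vd0 := by
          funext i
          show (if i = S.i0 then S.d else 0) = vd0 i
          rw [hvd0]
          by_cases h : i = S.i0
          · rw [if_pos h]
            have h0 : i.val = 0 := by rw [h]; rfl
            simp [h0, hSd]
          · rw [if_neg h]
            have h0 : ¬ (i.val = 0) := fun hc => h (Fin.ext hc)
            simp [h0]
        refine ⟨Φ u, ⟨u, huU, rfl⟩, g, hg1, hg2, ?_⟩
        intro j s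
        show g (translMap (u j) s) = (αf j).1 s
        have e1 : translMap (u j) s = translMap S.vd (translMap (v j) s) := by
          rw [translMap_translMap, hvd]
        rw [e1, hg3 (translMap (v j) s), hv j s]



/-- `|M^{[n,k]}|` is finite mod `Gₙ`: the dimension of `|Mⁿ|` restricted to
`M^{[n,k]}` is bounded (by `k − n`), and for each `p` there are finitely many `Gₙ`-orbits of
`p`-simplices, i.e. a finite set of representatives. -/
theorem stmt_14 (n k : ℕ) :
    (∀ p (α : Fin (p + 1) → MMon n), IsSimplexNK n k p α → p ≤ k - n) ∧
    ∀ p : ℕ, ∃ R : Set (Fin (p + 1) → MMon n), R.Finite ∧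
      (∀ β ∈ R, IsSimplexNK n k p β) ∧
      ∀ α : Fin (p + 1) → MMon n, IsSimplexNK n k p α →
        ∃ β ∈ R, ∃ g : QSet n → QSet n, MCond g ∧ Function.Bijective g ∧
          ∀ j s, g ((β j).1 s) = (α j).1 s := stmt_14' n k
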